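/- arXiv:2004.01947 — 5 statements merged into one kernel-verified Lean document; each statement's English description precedes it below -/
import Mathlib

section
/- Let v(t,x) = a(x)w(t,x) with a continuous, a > 0 on (0,∞), and suppose there exist δ > 0 and x₀ > 0 with w(t,x) ≥ δ for all t ∈ [0,T) and x ∈ (0,x₀). Then the interval (0,x₀) is negatively invariant for the characteristic flow: if X(τ;t,x) < x₀ for some τ in the maximal interval, then X(s;t,x) < x₀ for all s ∈ (σ_t(x), τ), and moreover (d/ds) A(X(s;t,x)) ≥ δ on that interval, where A(x) = ∫₀^x dy/a(y). -/
open MeasureTheory Set Filter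

/-- Negative invariance of `(0, x₀)` for the characteristic flow of the factorized field
`v(t,x) = a(x) w(t,x)` with inward flow `w ≥ δ > 0` on `(0,x₀)`: if a characteristic `X`
through `(t,x)`, maximal to the left at `σ`, satisfies `X τ < x₀` for some `τ` in its
interval, then `X s < x₀` for all `s ∈ (σ, τ)` and there `(d/ds) A(X s) ≥ δ`, where
`A x = ∫₀ˣ dy / a y`. -/
theorem stmt4 (T δ x₀ : ℝ) (hT : 0 < T) (hδ : 0 < δ) (hx₀ : 0 < x₀)
    (a : ℝ → ℝ) (w : ℝ → ℝ → ℝ) (A : ℝ → ℝ)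
    (ha_cont : ContinuousOn a (Set.Ici 0))
    (ha_pos : ∀ x > (0:ℝ), 0 < a x)
    (ha_int : MeasureTheory.IntegrableOn (fun y => 1 / a y) (Set.Ioo 0 1))
    (hw : ∀ t ∈ Set.Ico (0:ℝ) T, ∀ x ∈ Set.Ioo (0:ℝ) x₀, δ ≤ w t x)
    (hA : ∀ x > (0:ℝ), A x = ∫ y in Set.Ioo 0 x, 1 / a y)
    (t x σ T' : ℝ) (ht : t ∈ Set.Ico (0:ℝ) T) (hx : 0 < x)
    (hσ : 0 ≤ σ) (hσt : σ < t ∨ (σ = 0 ∧ t = 0)) (hT' : t < T') (hT'T : T' ≤ T)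
    (X : ℝ → ℝ) (hXt : X t = x)
    (hXpos : ∀ s ∈ Set.Ioo σ T', 0 < X s)
    (hODE : ∀ s ∈ Set.Ioo σ T', HasDerivAt X (a (X s) * w s (X s)) s)
    (τ : ℝ) (hτ : τ ∈ Set.Ioo σ T') (hXτ : X τ < x₀) :
    ∀ s ∈ Set.Ioo σ τ, X s < x₀ ∧
      ∃ d : ℝ, δ ≤ d ∧ HasDerivAt (fun r => A (X r)) d s := by
  have hτσ : σ < τ := hτ.1
  have hτT' : τ < T' := hτ.2
  have hXcont : ∀ r ∈ Set.Ioo σ T', ContinuousAt X r := fun r hr => (hODE r hr).continuousAt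
  intro s hs
  have hsσ : σ < s := hs.1
  have hsτ : s < τ := hs.2
  have hsIoo : s ∈ Set.Ioo σ T' := ⟨hsσ, lt_trans hsτ hτT'⟩
  -- Step 1: invariance
  have key : X s < x₀ := by
    by_contra hcon
    push_neg at hcon
    set S : Set ℝ := {r | r ∈ Set.Icc s τ ∧ x₀ ≤ X r} with hS
    have hsS : s ∈ S := ⟨⟨le_refl s, le_of_lt hsτ⟩, hcon⟩
    have hSne : S.Nonempty := ⟨s, hsS⟩
    have hSbdd : BddAbove S := ⟨τ, fun r hr => hr.1.2⟩
    set c := sSup S with hc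
    have hsc : s ≤ c := le_csSup hSbdd hsS
    have hcτ : c ≤ τ := csSup_le hSne fun r hr => hr.1.2
    have hcmem : c ∈ Set.Ioo σ T' := ⟨lt_of_lt_of_le hsσ hsc, lt_of_le_of_lt hcτ hτT'⟩
    have hXc : x₀ ≤ X c := by
      have hcl : c ∈ closure S := csSup_mem_closure hSne hSbdd
      have hcw : ContinuousWithinAt X S c := (hXcont c hcmem).continuousWithinAt
      have h1 : X c ∈ closure (X '' S) := hcw.mem_closure_image hcl
      have hsub : X '' S ⊆ Set.Ici x₀ := by rintro _ ⟨r, hr, rfl⟩; exact hr.2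
      have h2 : X c ∈ closure (Set.Ici x₀) := closure_mono hsub h1
      rwa [isClosed_Ici.closure_eq] at h2
    have hcτ' : c < τ :=
      lt_of_le_of_ne hcτ (fun h => absurd hXc (by rw [h]; exact not_le.2 hXτ))
    have hafter : ∀ r, c < r → r ≤ τ → X r < x₀ := by
      intro r hcr hrτ
      by_contra hcon2
      push_neg at hcon2
      have hrS : r ∈ S := ⟨⟨le_trans hsc (le_of_lt hcr), hrτ⟩, hcon2⟩
      exact absurd (le_csSup hSbdd hrS) (not_le.2 hcr)
    have hmono : ∀ r₀, c < r₀ → StrictMonoOn X (Set.Icc r₀ τ) := by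
      intro r₀ hr₀
      have hmem : ∀ u ∈ Set.Icc r₀ τ, u ∈ Set.Ioo σ T' := fun u hu =>
        ⟨lt_trans hcmem.1 (lt_of_lt_of_le hr₀ hu.1), lt_of_le_of_lt hu.2 hτT'⟩
      apply strictMonoOn_of_deriv_pos (convex_Icc _ _)
      · intro u hu
        exact (hXcont u (hmem u hu)).continuousWithinAt
      · intro u hu
        rw [interior_Icc] at hu
        have huI : u ∈ Set.Ioo σ T' := hmem u ⟨le_of_lt hu.1, le_of_lt hu.2⟩
        have hupos : 0 < X u := hXpos u huI
        have hux₀ : X u < x₀ := hafter u (lt_trans hr₀ hu.1) (le_of_lt hu.2)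
        have huT : u ∈ Set.Ico (0:ℝ) T :=
          ⟨le_of_lt (lt_of_le_of_lt hσ huI.1), lt_of_lt_of_le (lt_trans hu.2 hτT') hT'T⟩
        rw [(hODE u huI).deriv]
        exact mul_pos (ha_pos _ hupos)
          (lt_of_lt_of_le hδ (hw u huT (X u) ⟨hupos, hux₀⟩))
    set m := (c + τ) / 2 with hm
    have hcm : c < m := by simp only [hm]; linarith
    have hmτ : m < τ := by simp only [hm]; linarith
    have hXm : X m < x₀ := hafter m hcm (le_of_lt hmτ)
    have hbound : ∀ r ∈ Set.Ioc c m, X r ≤ X m := by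
      intro r hr
      exact (hmono r hr.1).monotoneOn ⟨le_refl r, le_trans hr.2 (le_of_lt hmτ)⟩
        ⟨hr.2, le_of_lt hmτ⟩ hr.2
    have htend : Filter.Tendsto X (nhdsWithin c (Set.Ioi c)) (nhds (X c)) :=
      ((hXcont c hcmem).tendsto).mono_left nhdsWithin_le_nhds
    have hev2 : ∀ᶠ r in nhdsWithin c (Set.Ioi c), X r ≤ X m := by
      filter_upwards [Ioc_mem_nhdsGT_of_mem ⟨le_refl c, hcm⟩] with r hr using hbound r hr
    have hfin : X c ≤ X m := le_of_tendsto htend hev2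
    linarith
  refine ⟨key, ?_⟩
  -- Step 2: the derivative
  have hXs := hODE s hsIoo
  have hp : 0 < X s := hXpos s hsIoo
  have hap : 0 < a (X s) := ha_pos _ hp
  have hacont : ∀ q > (0:ℝ), ContinuousAt a q := fun q hq =>
    ha_cont.continuousAt (Ici_mem_nhds hq)
  have hfc : ∀ q > (0:ℝ), ContinuousAt (fun y => 1 / a y) q := fun q hq =>
    continuousAt_const.div (hacont q hq) (ne_of_gt (ha_pos q hq))
  have hmeas : StronglyMeasurableAtFilter (fun y => 1 / a y) (nhds (X s)) := by
    have hco : ContinuousOn (fun y => 1 / a y) (Set.Ioi 0) := fun q hq =>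
      (hfc q hq).continuousWithinAt
    exact hco.stronglyMeasurableAtFilter isOpen_Ioi (X s) hp
  have hint : IntervalIntegrable (fun y => 1 / a y) volume 0 (X s) := by
    rw [intervalIntegrable_iff_integrableOn_Ioc_of_le (le_of_lt hp)]
    have hsub : Set.Ioc 0 (X s) ⊆ Set.Ioo 0 1 ∪ Set.Icc 1 (max 1 (X s)) := by
      intro y hy
      rcases lt_or_ge y 1 with h1 | h1
      · exact Or.inl ⟨hy.1, h1⟩
      · exact Or.inr ⟨h1, le_max_of_le_right hy.2⟩
    have hicc : IntegrableOn (fun y => 1 / a y) (Set.Icc 1 (max 1 (X s))) := by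
      apply ContinuousOn.integrableOn_Icc
      intro y hy
      exact (hfc y (lt_of_lt_of_le one_pos hy.1)).continuousWithinAt
    exact (ha_int.union hicc).mono_set hsub
  have hF : HasDerivAt (fun u => ∫ y in (0:ℝ)..u, 1 / a y) (1 / a (X s)) (X s) :=
    intervalIntegral.integral_hasDerivAt_right hint hmeas (hfc (X s) hp)
  have hcomp : HasDerivAt (fun r => ∫ y in (0:ℝ)..(X r), 1 / a y)
      (1 / a (X s) * (a (X s) * w s (X s))) s := hF.comp s hXs
  have hev : (fun r => A (X r)) =ᶠ[nhds s] (fun r => ∫ y in (0:ℝ)..(X r), 1 / a y) := by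
    filter_upwards [(hXs.continuousAt).preimage_mem_nhds (Ioi_mem_nhds hp)] with r hr
    have hr' : (0:ℝ) < X r := hr
    rw [hA (X r) hr', intervalIntegral.integral_of_le (le_of_lt hr'),
      MeasureTheory.integral_Ioc_eq_integral_Ioo]
  refine ⟨1 / a (X s) * (a (X s) * w s (X s)), ?_, hcomp.congr_of_eventuallyEq hev⟩
  have heq : 1 / a (X s) * (a (X s) * w s (X s)) = w s (X s) := by
    field_simp
  rw [heq]
  exact hw s ⟨le_of_lt (lt_of_le_of_lt hσ hsσ), lt_of_lt_of_le (lt_trans hsτ hτT') hT'T⟩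
    (X s) ⟨hp, key⟩
end

section
/- Under the inward-flow assumption (w ≥ δ on (0,x₀)) and with v = a·w sublinear, for every (t,x) the maximal interval of the characteristic is Σ_{t,x} = (σ_t(x), T) if t > 0 (and [0,T) if t = 0), and for every s ∈ [t,T) one has X(s;t,x) ≥ min(x, x₀). -/
open MeasureTheory Set Filter

namespace Stmt5Aux

/-- Barrier lemma: if `g` has positive derivative wherever it is below `c`, and starts
at or above `c`, it stays at or above `c`. -/
lemma barrier {g d : ℝ → ℝ} {p q c : ℝ}
    (hg : ContinuousOn g (Icc p q))
    (hd : ∀ z ∈ Ioo p q, HasDerivAt g (d z) z)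
    (hpos : ∀ z ∈ Ioo p q, g z < c → 0 < d z)
    (hp : c ≤ g p) : ∀ z ∈ Icc p q, c ≤ g z := by
  intro z hz
  by_contra hlt
  push_neg at hlt
  have hpz : p < z := lt_of_le_of_ne hz.1 (fun h => absurd (h ▸ hp) (not_le.mpr hlt))
  set S := Icc p z ∩ g ⁻¹' (Ici c) with hS
  have hSne : S.Nonempty := ⟨p, ⟨le_rfl, hpz.le⟩, hp⟩
  have hSbdd : BddAbove S := ⟨z, fun u hu => hu.1.2⟩
  have hsub : Icc p z ⊆ Icc p q := Icc_subset_Icc le_rfl hz.2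
  have hSclosed : IsClosed S :=
    ContinuousOn.preimage_isClosed_of_isClosed (hg.mono hsub) isClosed_Icc isClosed_Ici
  have hu : sSup S ∈ S := hSclosed.csSup_mem hSne hSbdd
  set u := sSup S
  have huz : u < z := lt_of_le_of_ne hu.1.2 (fun h => absurd (h ▸ hu.2) (not_le.mpr hlt))
  have habove : ∀ y ∈ Ioc u z, g y < c := by
    intro y hy
    by_contra h
    push_neg at h
    exact absurd (le_csSup hSbdd ⟨⟨hu.1.1.trans hy.1.le, hy.2⟩, h⟩) (not_le.mpr hy.1)
  obtain ⟨ξ, hξ, hslope⟩ := exists_hasDerivAt_eq_slope g d huz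
    (hg.mono (Icc_subset_Icc hu.1.1 hz.2))
    (fun y hy => hd y ⟨lt_of_le_of_lt hu.1.1 hy.1, lt_of_lt_of_le hy.2 hz.2⟩)
  have hgξ : g ξ < c := habove ξ ⟨hξ.1, hξ.2.le⟩
  have hdpos : 0 < d ξ := hpos ξ ⟨lt_of_le_of_lt hu.1.1 hξ.1, lt_of_lt_of_le hξ.2 hz.2⟩ hgξ
  rw [hslope] at hdpos
  rcases div_pos_iff.mp hdpos with ⟨h1, _⟩ | ⟨_, h2⟩
  · have : c ≤ g u := hu.2
    linarith
  · linarith [sub_pos.mpr huz]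

lemma vacuous_hasDerivWithinAt {f : ℝ → ℝ} {d x : ℝ} {s : Set ℝ} (h : x ∉ closure s) :
    HasDerivWithinAt f d s x := by
  have := HasFDerivWithinAt.hasDerivWithinAt
    (HasFDerivWithinAt.of_notMem_closure (𝕜 := ℝ) (E := ℝ) (F := ℝ)
      (f := f) (f' := ContinuousLinearMap.smulRight (1 : ℝ →L[ℝ] ℝ) d) h)
  simpa using this

/-- Gluing two solutions of an ODE at a common point. -/
lemma glue {F : ℝ → ℝ → ℝ} {α β c : ℝ} {f₁ f₂ : ℝ → ℝ}
    (hc : c ∈ Icc α β)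
    (h₁ : ∀ s ∈ Icc α c, 0 < f₁ s ∧ HasDerivWithinAt f₁ (F s (f₁ s)) (Icc α c) s)
    (h₂ : ∀ s ∈ Icc c β, 0 < f₂ s ∧ HasDerivWithinAt f₂ (F s (f₂ s)) (Icc c β) s)
    (heq : f₁ c = f₂ c) :
    (∀ s ∈ Icc α c, (fun u => if u ≤ c then f₁ u else f₂ u) s = f₁ s) ∧
    (∀ s ∈ Icc c β, (fun u => if u ≤ c then f₁ u else f₂ u) s = f₂ s) ∧
    ∀ s ∈ Icc α β, 0 < (fun u => if u ≤ c then f₁ u else f₂ u) s ∧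
      HasDerivWithinAt (fun u => if u ≤ c then f₁ u else f₂ u)
        (F s ((fun u => if u ≤ c then f₁ u else f₂ u) s)) (Icc α β) s := by
  set h : ℝ → ℝ := fun u => if u ≤ c then f₁ u else f₂ u with hdef
  have hEq1 : ∀ s ∈ Icc α c, h s = f₁ s := fun u hu => if_pos hu.2
  have hEq2 : ∀ s ∈ Icc c β, h s = f₂ s := by
    intro u hu
    by_cases h' : u ≤ c
    · have hu' : u = c := le_antisymm h' hu.1
      rw [hu']
      show (if c ≤ c then f₁ c else f₂ c) = f₂ c
      rw [if_pos le_rfl, heq]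
    · simp only [hdef, if_neg h']
  refine ⟨hEq1, hEq2, ?_⟩
  intro s hs
  have hunion : Icc α β = Icc α c ∪ Icc c β := (Icc_union_Icc_eq_Icc hc.1 hc.2).symm
  constructor
  · by_cases h' : s ≤ c
    · rw [hEq1 s ⟨hs.1, h'⟩]; exact (h₁ s ⟨hs.1, h'⟩).1
    · push_neg at h'
      rw [hEq2 s ⟨h'.le, hs.2⟩]; exact (h₂ s ⟨h'.le, hs.2⟩).1
  · rw [hunion]
    by_cases h' : s ≤ c
    · have hs1 : s ∈ Icc α c := ⟨hs.1, h'⟩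
      have hEqs : h s = f₁ s := hEq1 s hs1
      have A : HasDerivWithinAt h (F s (h s)) (Icc α c) s := by
        rw [hEqs]
        exact ((h₁ s hs1).2).congr (fun u hu => hEq1 u hu) hEqs
      have B : HasDerivWithinAt h (F s (h s)) (Icc c β) s := by
        rcases lt_or_eq_of_le h' with h'' | h''
        · exact vacuous_hasDerivWithinAt (by
            rw [isClosed_Icc.closure_eq]
            exact fun hmem => absurd hmem.1 (not_le.mpr h''))
        · subst h''
          have hs2 : s ∈ Icc s β := ⟨le_rfl, hs.2⟩
          have hEqs2 : h s = f₂ s := hEq2 s hs2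
          rw [hEqs2]
          exact ((h₂ s hs2).2).congr (fun u hu => hEq2 u hu) hEqs2
      exact A.union B
    · push_neg at h'
      have hs2 : s ∈ Icc c β := ⟨h'.le, hs.2⟩
      have hEqs : h s = f₂ s := hEq2 s hs2
      have B : HasDerivWithinAt h (F s (h s)) (Icc c β) s := by
        rw [hEqs]
        exact ((h₂ s hs2).2).congr (fun u hu => hEq2 u hu) hEqs
      have A : HasDerivWithinAt h (F s (h s)) (Icc α c) s :=
        vacuous_hasDerivWithinAt (by
          rw [isClosed_Icc.closure_eq]
          exact fun hmem => absurd hmem.2 (not_le.mpr h'))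
      exact A.union B

/-- Arithmetic bound for the Grönwall bound. -/
lemma gb_le {d c u K T : ℝ} (hK : 0 < K) (hd : 0 ≤ d) (hc : 0 ≤ c) (hu : 0 ≤ u) (huT : u ≤ T) :
    gronwallBound d K (K * (1 + c)) u ≤ (d + 1 + c) * Real.exp (K * T) := by
  rw [gronwallBound_of_K_ne_0 hK.ne']
  have h1 : K * (1 + c) / K = 1 + c := by field_simp
  show d * Real.exp (K * u) + K * (1 + c) / K * (Real.exp (K * u) - 1) ≤ _
  rw [h1]
  have he : Real.exp (K * u) ≤ Real.exp (K * T) :=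
    Real.exp_le_exp.mpr (by nlinarith)
  have he1 : (1:ℝ) ≤ Real.exp (K * u) := Real.one_le_exp (by positivity)
  nlinarith [mul_le_mul_of_nonneg_left he hd,
    mul_le_mul_of_nonneg_left he (by linarith : (0:ℝ) ≤ 1 + c)]

/-- Clamping function facts. -/
lemma proj_mem {lo hi : ℝ} (h : lo ≤ hi) (y : ℝ) : max lo (min y hi) ∈ Icc lo hi :=
  ⟨le_max_left _ _, max_le h (min_le_right _ _)⟩

lemma proj_eq_self {lo hi y : ℝ} (h1 : lo ≤ y) (h2 : y ≤ hi) : max lo (min y hi) = y := by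
  rw [min_eq_left h2, max_eq_right h1]

lemma proj_lipschitz {lo hi : ℝ} (y z : ℝ) :
    |max lo (min y hi) - max lo (min z hi)| ≤ |y - z| := by
  calc |max lo (min y hi) - max lo (min z hi)|
      = |max (min y hi) lo - max (min z hi) lo| := by rw [max_comm, max_comm (min z hi)]
    _ ≤ |min y hi - min z hi| := abs_max_sub_max_le_abs _ _ _
    _ ≤ max |y - z| |hi - hi| := abs_min_sub_min_le_max _ _ _ _
    _ = |y - z| := by simp

lemma proj_le {lo hi y : ℝ} : max lo (min y hi) ≤ max lo y :=
  max_le_max le_rfl (min_le_left _ _)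

lemma hasDerivWithinAt_singletonR {f : ℝ → ℝ} {d x : ℝ} : HasDerivWithinAt f d {x} x := by
  have h : HasDerivWithinAt f d (({x} : Set ℝ) \ {x}) x := vacuous_hasDerivWithinAt (by simp)
  exact hasDerivWithinAt_diff_singleton.mp h

/-- The ODE property on a closed interval: positivity and the characteristic equation. -/
@[reducible] def ODEon (a : ℝ → ℝ) (w : ℝ → ℝ → ℝ) (α β : ℝ) (f : ℝ → ℝ) : Prop :=
  ∀ s ∈ Icc α β, 0 < f s ∧ HasDerivWithinAt f (a (f s) * w s (f s)) (Icc α β) s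

lemma ODEon.mono {a : ℝ → ℝ} {w : ℝ → ℝ → ℝ} {α β α' β' : ℝ} {f : ℝ → ℝ}
    (h : ODEon a w α β f) (h1 : α ≤ α') (h2 : β' ≤ β) : ODEon a w α' β' f :=
  fun s hs => ⟨(h s ⟨le_trans h1 hs.1, le_trans hs.2 h2⟩).1,
    ((h s ⟨le_trans h1 hs.1, le_trans hs.2 h2⟩).2).mono (Icc_subset_Icc h1 h2)⟩

lemma ODEon.continuousOn {a : ℝ → ℝ} {w : ℝ → ℝ → ℝ} {α β : ℝ} {f : ℝ → ℝ}
    (h : ODEon a w α β f) : ContinuousOn f (Icc α β) :=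
  fun s hs => ((h s hs).2).continuousWithinAt

section Main

variable {T K δ x₀ : ℝ} {a : ℝ → ℝ} {w vx : ℝ → ℝ → ℝ}

lemma contV (ha_cont : ContinuousOn a (Set.Ici 0))
    (hw_cont : ContinuousOn (fun p : ℝ × ℝ => w p.1 p.2) (Set.Ico 0 T ×ˢ Set.Ici 0)) :
    ContinuousOn (fun p : ℝ × ℝ => a p.2 * w p.1 p.2) (Ico 0 T ×ˢ Ici 0) :=
  ContinuousOn.mul
    (ha_cont.comp continuous_snd.continuousOn (fun _ hp => hp.2)) hw_cont

lemma lipV (hT : 0 < T)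
    (hvx : ∀ t ∈ Set.Ico (0:ℝ) T, ∀ x > (0:ℝ),
      HasDerivAt (fun y => a y * w t y) (vx t x) x)
    (hvx_cont : ContinuousOn (fun p : ℝ × ℝ => vx p.1 p.2) (Set.Ico 0 T ×ˢ Set.Ioi 0))
    {T₁ ρ Q : ℝ} (hT₁ : 0 ≤ T₁) (hT₁T : T₁ < T) (hρ : 0 < ρ) (hρQ : ρ ≤ Q) :
    ∃ L : NNReal, ∀ s ∈ Icc (0:ℝ) T₁, LipschitzOnWith L (fun y => a y * w s y) (Icc ρ Q) := by
  have hbox : IsCompact (Icc (0:ℝ) T₁ ×ˢ Icc ρ Q) := isCompact_Icc.prod isCompact_Icc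
  have hsub : Icc (0:ℝ) T₁ ×ˢ Icc ρ Q ⊆ Ico 0 T ×ˢ Ioi 0 := fun p hp =>
    ⟨⟨hp.1.1, lt_of_le_of_lt hp.1.2 hT₁T⟩, lt_of_lt_of_le hρ hp.2.1⟩
  have hcont : ContinuousOn (fun p : ℝ × ℝ => |vx p.1 p.2|) (Icc (0:ℝ) T₁ ×ˢ Icc ρ Q) :=
    (hvx_cont.mono hsub).abs
  have hne : (Icc (0:ℝ) T₁ ×ˢ Icc ρ Q).Nonempty := ⟨(0, ρ), ⟨le_rfl, hT₁⟩, ⟨le_rfl, hρQ⟩⟩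
  obtain ⟨p₀, hp₀, hmax⟩ := hbox.exists_isMaxOn hne hcont
  refine ⟨(|vx p₀.1 p₀.2|).toNNReal, fun s hs => ?_⟩
  apply Convex.lipschitzOnWith_of_nnnorm_hasDerivWithin_le (convex_Icc ρ Q)
    (f' := fun y => vx s y)
    (fun y hy => (hvx s ⟨hs.1, lt_of_le_of_lt hs.2 hT₁T⟩ y (lt_of_lt_of_le hρ hy.1)).hasDerivWithinAt)
  intro y hy
  have hb : |vx s y| ≤ |vx p₀.1 p₀.2| := hmax (⟨hs, hy⟩ : ((s,y) : ℝ × ℝ) ∈ Icc (0:ℝ) T₁ ×ˢ Icc ρ Q)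
  rw [← NNReal.coe_le_coe, coe_nnnorm, Real.coe_toNNReal _ (abs_nonneg _), Real.norm_eq_abs]
  exact hb

lemma uniqOn (hT : 0 < T)
    (hvx : ∀ t ∈ Set.Ico (0:ℝ) T, ∀ x > (0:ℝ),
      HasDerivAt (fun y => a y * w t y) (vx t x) x)
    (hvx_cont : ContinuousOn (fun p : ℝ × ℝ => vx p.1 p.2) (Set.Ico 0 T ×ˢ Set.Ioi 0))
    {α β t₁ : ℝ} {f g : ℝ → ℝ} (hα : 0 ≤ α) (hβ : β < T) (ht₁ : t₁ ∈ Icc α β)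
    (hf : ODEon a w α β f) (hg : ODEon a w α β g) (heq : f t₁ = g t₁) :
    EqOn f g (Icc α β) := by
  have hαβ : α ≤ β := ht₁.1.trans ht₁.2
  have hne : (Icc α β).Nonempty := nonempty_Icc.mpr hαβ
  have hfc : ContinuousOn f (Icc α β) := hf.continuousOn
  have hgc : ContinuousOn g (Icc α β) := hg.continuousOn
  obtain ⟨zf, hzf, hminf⟩ := isCompact_Icc.exists_isMinOn hne hfc
  obtain ⟨zg, hzg, hming⟩ := isCompact_Icc.exists_isMinOn hne hgc
  obtain ⟨yf, hyf, hmaxf⟩ := isCompact_Icc.exists_isMaxOn hne hfc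
  obtain ⟨yg, hyg, hmaxg⟩ := isCompact_Icc.exists_isMaxOn hne hgc
  set ρ := min (f zf) (g zg) with hρdef
  set Q := max (f yf) (g yg) with hQdef
  have hρ : 0 < ρ := lt_min (hf zf hzf).1 (hg zg hzg).1
  have hρQ : ρ ≤ Q := le_trans (min_le_left _ _)
    (le_trans (hminf ht₁) (le_trans (hmaxf ht₁) (le_max_left _ _)))
  obtain ⟨L, hL⟩ := lipV hT hvx hvx_cont (le_trans hα hαβ) hβ hρ hρQ
  set st : ℝ → Set ℝ := fun z => {y | y ∈ Icc ρ Q ∧ z ∈ Icc (0:ℝ) β} with hst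
  have hLip : ∀ z, LipschitzOnWith L (fun y => a y * w z y) (st z) := by
    intro z
    by_cases hz : z ∈ Icc (0:ℝ) β
    · have h1 : st z = Icc ρ Q := by ext y; simp only [hst, mem_setOf_eq, and_iff_left hz]
      rw [h1]; exact hL z hz
    · have h1 : st z = ∅ := by ext y; simp only [hst, mem_setOf_eq, mem_empty_iff_false, iff_false]; exact fun h => hz h.2
      rw [h1]; exact lipschitzOnWith_empty _ _
  have hmemf : ∀ z ∈ Icc α β, f z ∈ st z := fun z hz =>
    ⟨⟨le_trans (min_le_left _ _) (hminf hz), le_trans (hmaxf hz) (le_max_left _ _)⟩,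
      ⟨le_trans hα hz.1, hz.2⟩⟩
  have hmemg : ∀ z ∈ Icc α β, g z ∈ st z := fun z hz =>
    ⟨⟨le_trans (min_le_right _ _) (hming hz), le_trans (hmaxg hz) (le_max_right _ _)⟩,
      ⟨le_trans hα hz.1, hz.2⟩⟩
  have hIci : ∀ (h : ℝ → ℝ), ODEon a w α β h → ∀ z ∈ Ico t₁ β,
      HasDerivWithinAt h (a (h z) * w z (h z)) (Ici z) z := by
    intro h hode z hz
    refine ((hode z ⟨le_trans ht₁.1 hz.1, hz.2.le⟩).2).mono_of_mem_nhdsWithin ?_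
    filter_upwards [mem_nhdsWithin_of_mem_nhds (Iic_mem_nhds hz.2), self_mem_nhdsWithin]
      with u hu1 hu2
    exact ⟨le_trans (le_trans ht₁.1 hz.1) hu2, hu1⟩
  have hIic : ∀ (h : ℝ → ℝ), ODEon a w α β h → ∀ z ∈ Ioc α t₁,
      HasDerivWithinAt h (a (h z) * w z (h z)) (Iic z) z := by
    intro h hode z hz
    refine ((hode z ⟨hz.1.le, le_trans hz.2 ht₁.2⟩).2).mono_of_mem_nhdsWithin ?_
    filter_upwards [mem_nhdsWithin_of_mem_nhds (Ici_mem_nhds hz.1), self_mem_nhdsWithin]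
      with u hu1 hu2
    exact ⟨hu1, le_trans hu2 (le_trans hz.2 ht₁.2)⟩
  have hright : EqOn f g (Icc t₁ β) :=
    ODE_solution_unique_of_mem_Icc_right (fun z _ => hLip z)
      (hfc.mono (Icc_subset_Icc_left ht₁.1))
      (fun z hz => hIci f hf z hz)
      (fun z hz => hmemf z ⟨le_trans ht₁.1 hz.1, hz.2.le⟩)
      (hgc.mono (Icc_subset_Icc_left ht₁.1))
      (fun z hz => hIci g hg z hz)
      (fun z hz => hmemg z ⟨le_trans ht₁.1 hz.1, hz.2.le⟩)
      heq
  have hleft : EqOn f g (Icc α t₁) :=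
    ODE_solution_unique_of_mem_Icc_left (fun z _ => hLip z)
      (hfc.mono (Icc_subset_Icc_right ht₁.2))
      (fun z hz => hIic f hf z hz)
      (fun z hz => hmemf z ⟨hz.1.le, le_trans hz.2 ht₁.2⟩)
      (hgc.mono (Icc_subset_Icc_right ht₁.2))
      (fun z hz => hIic g hg z hz)
      (fun z hz => hmemg z ⟨hz.1.le, le_trans hz.2 ht₁.2⟩)
      heq
  intro s hs
  rcases le_total s t₁ with h | h
  · exact hleft ⟨hs.1, h⟩
  · exact hright ⟨h, hs.2⟩

lemma forwardSol (hT : 0 < T) (hK : 0 < K) (hδ : 0 < δ) (hx₀ : 0 < x₀)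
    (ha_cont : ContinuousOn a (Set.Ici 0))
    (ha_pos : ∀ x > (0:ℝ), 0 < a x)
    (hw_cont : ContinuousOn (fun p : ℝ × ℝ => w p.1 p.2) (Set.Ico 0 T ×ˢ Set.Ici 0))
    (hvx : ∀ t ∈ Set.Ico (0:ℝ) T, ∀ x > (0:ℝ),
      HasDerivAt (fun y => a y * w t y) (vx t x) x)
    (hvx_cont : ContinuousOn (fun p : ℝ × ℝ => vx p.1 p.2) (Set.Ico 0 T ×ˢ Set.Ioi 0))
    (h_sub : ∀ t ∈ Set.Ico (0:ℝ) T, ∀ x > (0:ℝ), |a x * w t x| ≤ K * (1 + x))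
    (h_in : ∀ t ∈ Set.Ico (0:ℝ) T, ∀ x ∈ Set.Ioo (0:ℝ) x₀, δ ≤ w t x)
    {t x T' : ℝ} (ht : t ∈ Ico (0:ℝ) T) (hx : 0 < x) (hT' : T' ∈ Ico t T) :
    ∃ f : ℝ → ℝ, f t = x ∧ ∀ s ∈ Icc t T',
      min x x₀ ≤ f s ∧ f s ≤ (x + 1 + min x x₀ / 2) * Real.exp (K * T) ∧
      HasDerivWithinAt f (a (f s) * w s (f s)) (Icc t T') s := by
  set m := min x x₀ with hm
  have hm0 : 0 < m := lt_min hx hx₀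
  set m' := m / 2 with hm'
  have hm'0 : 0 < m' := by positivity
  set B := (x + 1 + m') * Real.exp (K * T) with hB
  have hex : (1:ℝ) ≤ Real.exp (K * T) := Real.one_le_exp (by positivity)
  have hexpos : (0:ℝ) < Real.exp (K * T) := Real.exp_pos _
  have hmx : m ≤ x := min_le_left _ _
  have hBx : x ≤ B := by nlinarith
  set M := B + 1 with hM
  have hmB : m ≤ B := le_trans hmx hBx
  have hm'M : m' ≤ M := by simp only [hM]; nlinarith
  set proj : ℝ → ℝ := fun y => max m' (min y M) with hproj
  set vc : ℝ → ℝ → ℝ := fun s y => a (proj y) * w s (proj y) with hvc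
  have hproj_mem : ∀ y, proj y ∈ Icc m' M := fun y => proj_mem hm'M y
  have hproj_pos : ∀ y, 0 < proj y := fun y => lt_of_lt_of_le hm'0 (hproj_mem y).1
  have hvc_bound : ∀ s ∈ Ico (0:ℝ) T, ∀ y : ℝ, |vc s y| ≤ K * (1 + M) := by
    intro s hs y
    calc |vc s y| ≤ K * (1 + proj y) := h_sub s hs _ (hproj_pos y)
    _ ≤ K * (1 + M) := by nlinarith [(hproj_mem y).2]
  obtain ⟨L, hL⟩ := lipV hT hvx hvx_cont (le_trans ht.1 hT'.1) hT'.2 hm'0 hm'M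
  have hvc_lip : ∀ s ∈ Icc t T', LipschitzWith L (vc s) := by
    intro s hs
    apply LipschitzWith.of_dist_le_mul
    intro y z
    calc dist (vc s y) (vc s z)
        ≤ L * dist (proj y) (proj z) :=
          (hL s ⟨le_trans ht.1 hs.1, hs.2⟩).dist_le_mul _ (hproj_mem y) _ (hproj_mem z)
      _ ≤ L * dist y z := by
          apply mul_le_mul_of_nonneg_left _ L.coe_nonneg
          rw [Real.dist_eq, Real.dist_eq]
          exact proj_lipschitz y z
  have hvc_cont : ∀ y : ℝ, ContinuousOn (fun s => vc s y) (Icc t T') := by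
    intro y
    have h1 : ContinuousOn (fun s : ℝ => ((s, proj y) : ℝ × ℝ)) (Icc t T') :=
      (continuous_id.prodMk continuous_const).continuousOn
    exact (contV ha_cont hw_cont).comp h1
      (fun s hs => ⟨⟨le_trans ht.1 hs.1, lt_of_le_of_lt hs.2 hT'.2⟩, (hproj_pos y).le⟩)
  set C := K * (1 + M) with hC
  have hM0 : 0 < M := by nlinarith
  have hC0 : 0 < C := by positivity
  set R := C * (T' - t) + 1 with hR
  have hR0 : 0 ≤ R := by
      have h0 : 0 ≤ T' - t := by linarith [hT'.1]
      have h1 : 0 ≤ C * (T' - t) := mul_nonneg hC0.le h0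
      simp only [hR]; linarith
  have hPL : IsPicardLindelof vc (tmin := t) (tmax := T') ⟨t, le_rfl, hT'.1⟩ x ⟨R, hR0⟩ 0
      ⟨C, hC0.le⟩ L := by
    constructor
    · exact fun s hs => (hvc_lip s hs).lipschitzOnWith
    · exact fun y _ => hvc_cont y
    · intro s hs y _
      rw [Real.norm_eq_abs]
      exact hvc_bound s ⟨le_trans ht.1 hs.1, lt_of_le_of_lt hs.2 hT'.2⟩ y
    · show C * max (T' - t) (t - t) ≤ R - ((0:NNReal):ℝ)
      rw [NNReal.coe_zero, sub_zero]
      rw [sub_self, max_eq_left (by linarith [hT'.1] : (0:ℝ) ≤ T' - t)]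
      simp only [hR]; linarith
  obtain ⟨f, hft, hfd⟩ : ∃ f : ℝ → ℝ, f t = x ∧
      ∀ s ∈ Icc t T', HasDerivWithinAt f (vc s (f s)) (Icc t T') s :=
    hPL.exists_eq_forall_mem_Icc_hasDerivWithinAt₀
  have hfc : ContinuousOn f (Icc t T') := fun s hs => (hfd s hs).continuousWithinAt
  have hfIci : ∀ s ∈ Ico t T', HasDerivWithinAt f (vc s (f s)) (Ici s) s := by
    intro s hs
    refine (hfd s ⟨hs.1, hs.2.le⟩).mono_of_mem_nhdsWithin ?_
    filter_upwards [mem_nhdsWithin_of_mem_nhds (Iic_mem_nhds hs.2), self_mem_nhdsWithin]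
      with u hu1 hu2
    exact ⟨le_trans hs.1 hu2, hu1⟩
  have hgron : ∀ s ∈ Icc t T', ‖f s‖ ≤ gronwallBound x K (K * (1 + m')) (s - t) := by
    apply norm_le_gronwallBound_of_norm_deriv_right_le hfc hfIci
    · rw [hft, Real.norm_eq_abs, abs_of_pos hx]
    · intro s hs
      rw [Real.norm_eq_abs, Real.norm_eq_abs]
      have h1 : |vc s (f s)| ≤ K * (1 + proj (f s)) :=
        h_sub s ⟨le_trans ht.1 hs.1, lt_trans hs.2 hT'.2⟩ _ (hproj_pos _)
      have h2 : proj (f s) ≤ m' + |f s| := by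
        refine le_trans proj_le (max_le (by linarith [abs_nonneg (f s)]) ?_)
        have := le_abs_self (f s)
        linarith
      nlinarith
  have hupper : ∀ s ∈ Icc t T', f s ≤ B := by
    intro s hs
    have h2 : gronwallBound x K (K * (1 + m')) (s - t) ≤ (x + 1 + m') * Real.exp (K * T) :=
      gb_le hK hx.le hm'0.le (by linarith [hs.1]) (by
        have := hs.2
        have := hT'.2
        have := ht.1
        linarith)
    calc f s ≤ |f s| := le_abs_self _
    _ ≤ gronwallBound x K (K * (1 + m')) (s - t) := by
        rw [← Real.norm_eq_abs]; exact hgron s hs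
    _ ≤ B := h2
  have hBM : B ≤ M := by simp only [hM]; linarith
  have hlower : ∀ s ∈ Icc t T', m ≤ f s := by
    apply barrier hfc (d := fun z => vc z (f z))
    · intro z hz
      exact (hfd z (Ioo_subset_Icc_self hz)).hasDerivAt (Icc_mem_nhds hz.1 hz.2)
    · intro z hz hfz
      have hfzM : f z ≤ M := le_trans hfz.le (le_trans hmB hBM)
      have hple : proj (f z) < m := by
        simp only [hproj]
        rw [min_eq_left hfzM]
        exact max_lt (by linarith) hfz
      have hmem2 : proj (f z) ∈ Ioo (0:ℝ) x₀ :=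
        ⟨hproj_pos _, lt_of_lt_of_le hple (min_le_right x x₀)⟩
      have hz' : z ∈ Ico (0:ℝ) T := ⟨le_trans ht.1 hz.1.le, lt_trans hz.2 hT'.2⟩
      exact mul_pos (ha_pos _ (hproj_pos _)) (lt_of_lt_of_le hδ (h_in z hz' _ hmem2))
    · rw [hft]; exact hmx
  refine ⟨f, hft, fun s hs => ⟨hlower s hs, hupper s hs, ?_⟩⟩
  have hid : proj (f s) = f s :=
    proj_eq_self (le_trans (by linarith : m' ≤ m) (hlower s hs))
      (le_trans (hupper s hs) hBM)
  have hd := hfd s hs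
  have heq2 : vc s (f s) = a (f s) * w s (f s) := by
    simp only [hvc]; rw [hid]
  rwa [heq2] at hd

lemma backSol (hT : 0 < T) (hK : 0 < K)
    (ha_cont : ContinuousOn a (Set.Ici 0))
    (hw_cont : ContinuousOn (fun p : ℝ × ℝ => w p.1 p.2) (Set.Ico 0 T ×ˢ Set.Ici 0))
    (hvx : ∀ t ∈ Set.Ico (0:ℝ) T, ∀ x > (0:ℝ),
      HasDerivAt (fun y => a y * w t y) (vx t x) x)
    (hvx_cont : ContinuousOn (fun p : ℝ × ℝ => vx p.1 p.2) (Set.Ico 0 T ×ˢ Set.Ioi 0))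
    (h_sub : ∀ t ∈ Set.Ico (0:ℝ) T, ∀ x > (0:ℝ), |a x * w t x| ≤ K * (1 + x))
    {T₁ ε Bb : ℝ} (hT₁ : 0 ≤ T₁) (hT₁T : T₁ < T) (hε : 0 < ε) (hBb : ε ≤ Bb) :
    ∃ τ > (0:ℝ), ∀ s₁ ∈ Ioc (0:ℝ) T₁, ∀ y₁ ∈ Icc ε Bb,
      ∃ f : ℝ → ℝ, f s₁ = y₁ ∧ ∀ s ∈ Icc (max 0 (s₁ - τ)) s₁,
        ε/2 ≤ f s ∧ f s ≤ Bb + ε/2 ∧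
        HasDerivWithinAt f (a (f s) * w s (f s)) (Icc (max 0 (s₁ - τ)) s₁) s := by
  set lo := ε/2 with hlo
  set hi := Bb + ε/2 with hhi
  have hlo0 : 0 < lo := by positivity
  have hlohi : lo ≤ hi := by simp only [hlo, hhi]; linarith
  set proj : ℝ → ℝ := fun y => max lo (min y hi) with hproj
  set vc : ℝ → ℝ → ℝ := fun s y => a (proj y) * w s (proj y) with hvc
  have hproj_mem : ∀ y, proj y ∈ Icc lo hi := fun y => proj_mem hlohi y
  have hproj_pos : ∀ y, 0 < proj y := fun y => lt_of_lt_of_le hlo0 (hproj_mem y).1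
  set C := K * (1 + hi) with hC
  have hC0 : 0 < C := by
    have : 0 < hi := lt_of_lt_of_le hlo0 hlohi
    positivity
  have hvc_bound : ∀ s ∈ Ico (0:ℝ) T, ∀ y : ℝ, |vc s y| ≤ C := by
    intro s hs y
    calc |vc s y| ≤ K * (1 + proj y) := h_sub s hs _ (hproj_pos y)
    _ ≤ C := by simp only [hC]; nlinarith [(hproj_mem y).2]
  obtain ⟨L, hL⟩ := lipV hT hvx hvx_cont hT₁ hT₁T hlo0 hlohi
  set τ := (ε/2) / C with hτ
  have hτ0 : 0 < τ := by positivity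
  refine ⟨τ, hτ0, ?_⟩
  intro s₁ hs₁ y₁ hy₁
  set tMin := max 0 (s₁ - τ) with htMin
  have htMin0 : 0 ≤ tMin := le_max_left _ _
  have htMins₁ : tMin ≤ s₁ := max_le hs₁.1.le (by linarith)
  have hvc_lip : ∀ s ∈ Icc tMin s₁, LipschitzWith L (vc s) := by
    intro s hs
    apply LipschitzWith.of_dist_le_mul
    intro y z
    calc dist (vc s y) (vc s z)
        ≤ L * dist (proj y) (proj z) :=
          (hL s ⟨le_trans htMin0 hs.1, le_trans hs.2 hs₁.2⟩).dist_le_mul _ (hproj_mem y) _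
            (hproj_mem z)
      _ ≤ L * dist y z := by
          apply mul_le_mul_of_nonneg_left _ L.coe_nonneg
          rw [Real.dist_eq, Real.dist_eq]
          exact proj_lipschitz y z
  have hvc_cont : ∀ y : ℝ, ContinuousOn (fun s => vc s y) (Icc tMin s₁) := by
    intro y
    have h1 : ContinuousOn (fun s : ℝ => ((s, proj y) : ℝ × ℝ)) (Icc tMin s₁) :=
      (continuous_id.prodMk continuous_const).continuousOn
    exact (contV ha_cont hw_cont).comp h1
      (fun s hs => ⟨⟨le_trans htMin0 hs.1, lt_of_le_of_lt (le_trans hs.2 hs₁.2) hT₁T⟩,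
        (hproj_pos y).le⟩)
  have hPL : IsPicardLindelof vc (tmin := tMin) (tmax := s₁) ⟨s₁, htMins₁, le_rfl⟩ y₁
      ⟨ε/2, by positivity⟩ 0 ⟨C, hC0.le⟩ L := by
    constructor
    · exact fun s hs => (hvc_lip s hs).lipschitzOnWith
    · exact fun y _ => hvc_cont y
    · intro s hs y _
      rw [Real.norm_eq_abs]
      exact hvc_bound s ⟨le_trans htMin0 hs.1, lt_of_le_of_lt (le_trans hs.2 hs₁.2) hT₁T⟩ y
    · show C * max (s₁ - s₁) (s₁ - tMin) ≤ ε/2 - ((0:NNReal):ℝ)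
      rw [NNReal.coe_zero, sub_zero]
      rw [sub_self]
      rw [max_comm, max_eq_left (by linarith : (0:ℝ) ≤ s₁ - tMin)]
      have h1 : s₁ - tMin ≤ τ := by
        have := le_max_right 0 (s₁ - τ)
        simp only [htMin]
        linarith [le_max_right (0:ℝ) (s₁ - τ)]
      calc C * (s₁ - tMin) ≤ C * τ := mul_le_mul_of_nonneg_left h1 hC0.le
      _ = ε/2 := by simp only [hτ]; field_simp
  obtain ⟨f, hf1, hfd⟩ : ∃ f : ℝ → ℝ, f s₁ = y₁ ∧
      ∀ s ∈ Icc tMin s₁, HasDerivWithinAt f (vc s (f s)) (Icc tMin s₁) s :=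
    hPL.exists_eq_forall_mem_Icc_hasDerivWithinAt₀
  have hball : ∀ s ∈ Icc tMin s₁, |f s - y₁| ≤ ε/2 := by
    intro s hs
    have h1 := norm_image_sub_le_of_norm_deriv_le_segment'
      (f := f) (f' := fun z => vc z (f z)) (C := C) (a := s) (b := s₁)
      (fun z hz => (hfd z ⟨le_trans hs.1 hz.1, hz.2⟩).mono (Icc_subset_Icc hs.1 le_rfl))
      (fun z hz => by
        rw [Real.norm_eq_abs]
        exact hvc_bound z ⟨le_trans htMin0 (le_trans hs.1 hz.1),
          lt_of_le_of_lt (le_trans hz.2.le hs₁.2) hT₁T⟩ (f z))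
      s₁ ⟨hs.2, le_rfl⟩
    rw [hf1, Real.norm_eq_abs] at h1
    have h2 : s₁ - s ≤ τ := by
      have := le_max_right (0:ℝ) (s₁ - τ)
      have hs1 := hs.1
      simp only [htMin] at hs1
      linarith [le_max_right (0:ℝ) (s₁ - τ)]
    have h3 : C * (s₁ - s) ≤ ε/2 := by
      calc C * (s₁ - s) ≤ C * τ := mul_le_mul_of_nonneg_left h2 hC0.le
      _ = ε/2 := by simp only [hτ]; field_simp
    rw [abs_sub_comm]
    linarith [le_trans h1 h3]
  refine ⟨f, hf1, fun s hs => ?_⟩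
  have hb := hball s hs
  rw [abs_le] at hb
  have hfs_lo : ε/2 ≤ f s := by linarith [hy₁.1]
  have hfs_hi : f s ≤ Bb + ε/2 := by linarith [hy₁.2]
  refine ⟨hfs_lo, hfs_hi, ?_⟩
  have hid : proj (f s) = f s := proj_eq_self hfs_lo hfs_hi
  have hd := hfd s hs
  have heq2 : vc s (f s) = a (f s) * w s (f s) := by simp only [hvc]; rw [hid]
  rwa [heq2] at hd

lemma backBound (hK : 0 < K)
    (h_sub : ∀ t ∈ Set.Ico (0:ℝ) T, ∀ x > (0:ℝ), |a x * w t x| ≤ K * (1 + x))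
    {α t : ℝ} {f : ℝ → ℝ} (hα : 0 ≤ α) (ht : t ∈ Ico (0:ℝ) T) (hαt : α ≤ t)
    (hode : ODEon a w α t f) :
    ∀ s ∈ Icc α t, f s ≤ (f t + 1) * Real.exp (K * T) := by
  set g : ℝ → ℝ := fun u => f (α + t - u) with hg
  set g' : ℝ → ℝ := fun u => a (f (α + t - u)) * w (α + t - u) (f (α + t - u)) * (-1) with hg'
  have hrev : ∀ u ∈ Icc α t, (α + t - u) ∈ Icc α t := fun u hu =>
    ⟨by linarith [hu.2], by linarith [hu.1]⟩
  have hfc := hode.continuousOn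
  have hgc : ContinuousOn g (Icc α t) :=
    hfc.comp ((continuous_const.sub continuous_id).continuousOn) (fun u hu => hrev u hu)
  have hftpos : 0 < f t := (hode t ⟨hαt, le_rfl⟩).1
  have hgd : ∀ u ∈ Ico α t, HasDerivWithinAt g (g' u) (Ici u) u := by
    intro u hu
    have hmem : (α + t - u) ∈ Icc α t := hrev u ⟨hu.1, hu.2.le⟩
    have houter := (hode _ hmem).2
    have hinner : HasDerivWithinAt (fun z : ℝ => α + t - z) (-1) (Icc u t) u := by
      simpa using ((hasDerivAt_id' u).const_sub (α + t)).hasDerivWithinAt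
        (s := Icc u t)
    have hmaps : MapsTo (fun z : ℝ => α + t - z) (Icc u t) (Icc α t) := by
      intro z hz
      show α + t - z ∈ Icc α t
      simp only [mem_Icc] at hz ⊢
      constructor <;> linarith [hz.1, hz.2, hu.1]
    have hcomp := HasDerivWithinAt.comp u houter hinner hmaps
    have hmem2 : Icc u t ∈ nhdsWithin u (Ici u) := by
      filter_upwards [mem_nhdsWithin_of_mem_nhds (Iic_mem_nhds hu.2), self_mem_nhdsWithin]
        with z h1 h2
      exact ⟨h2, h1⟩
    exact (hcomp.mono_of_mem_nhdsWithin hmem2 : _)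
  have hδ0 : ‖g α‖ ≤ f t := by
    have h1 : g α = f t := by simp only [hg]; rw [show α + t - α = t by ring]
    rw [h1, Real.norm_eq_abs, abs_of_pos hftpos]
  have hbound : ∀ u ∈ Ico α t, ‖g' u‖ ≤ K * ‖g u‖ + K := by
    intro u hu
    have hmem : (α + t - u) ∈ Icc α t := hrev u ⟨hu.1, hu.2.le⟩
    have hpos := (hode _ hmem).1
    have h1 : |a (f (α + t - u)) * w (α + t - u) (f (α + t - u))| ≤ K * (1 + f (α + t - u)) :=
      h_sub _ ⟨by linarith [hmem.1], lt_of_le_of_lt hmem.2 ht.2⟩ _ hpos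
    have h2 : ‖g u‖ = f (α + t - u) := by
      simp only [hg]; rw [Real.norm_eq_abs, abs_of_pos hpos]
    rw [h2]
    simp only [hg']
    rw [mul_neg_one, norm_neg, Real.norm_eq_abs]
    linarith [h1]
  have hgron := norm_le_gronwallBound_of_norm_deriv_right_le hgc hgd hδ0 hbound
  intro s hs
  have hu : (α + t - s) ∈ Icc α t := hrev s hs
  have h2 := hgron (α + t - s) hu
  have h3 : g (α + t - s) = f s := by
    simp only [hg]; rw [show α + t - (α + t - s) = s by ring]
  have h4 : gronwallBound (f t) K K (α + t - s - α) ≤ (f t + 1 + 0) * Real.exp (K * T) := by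
    have h4' := gb_le (d := f t) (c := 0) (u := α + t - s - α) (T := T) (K := K) hK
      hftpos.le le_rfl
      (show (0:ℝ) ≤ α + t - s - α by linarith [hs.2])
      (show α + t - s - α ≤ T by linarith [hs.1, ht.2, hα])
    have h5 : K * (1 + 0) = K := by ring
    rwa [h5] at h4' 
  rw [h3, Real.norm_eq_abs] at h2
  calc f s ≤ |f s| := le_abs_self _
  _ ≤ gronwallBound (f t) K K (α + t - s - α) := h2
  _ ≤ (f t + 1 + 0) * Real.exp (K * T) := h4
  _ = (f t + 1) * Real.exp (K * T) := by ring

end Main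

end Stmt5Aux

/-- Forward global existence of characteristics under the inward-flow assumption:
for the field `v(t,x) = a(x) w(t,x)`, sublinear and with `w ≥ δ > 0` on `(0,x₀)`,
every point `(t,x)` carries a maximal characteristic `X` defined on `(σ, T)`
(with `σ = 0` and the solution defined on `[0,T)` when `t = 0`), i.e. the maximal
interval is `Σ_{t,x} = (σ_t(x), T)`; it satisfies `X s ≥ min(x, x₀)` for all
`s ∈ [t, T)`, and when `σ > 0` it reaches the boundary: `X s → 0` as `s → σ⁺`. -/
theorem stmt5 (T K δ x₀ : ℝ) (hT : 0 < T) (hK : 0 < K) (hδ : 0 < δ) (hx₀ : 0 < x₀)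
    (a : ℝ → ℝ) (w : ℝ → ℝ → ℝ) (vx : ℝ → ℝ → ℝ)
    (ha_cont : ContinuousOn a (Set.Ici 0))
    (ha_pos : ∀ x > (0:ℝ), 0 < a x)
    (hw_cont : ContinuousOn (fun p : ℝ × ℝ => w p.1 p.2) (Set.Ico 0 T ×ˢ Set.Ici 0))
    (hvx : ∀ t ∈ Set.Ico (0:ℝ) T, ∀ x > (0:ℝ),
      HasDerivAt (fun y => a y * w t y) (vx t x) x)
    (hvx_cont : ContinuousOn (fun p : ℝ × ℝ => vx p.1 p.2) (Set.Ico 0 T ×ˢ Set.Ioi 0))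
    (h_sub : ∀ t ∈ Set.Ico (0:ℝ) T, ∀ x > (0:ℝ), |a x * w t x| ≤ K * (1 + x))
    (h_in : ∀ t ∈ Set.Ico (0:ℝ) T, ∀ x ∈ Set.Ioo (0:ℝ) x₀, δ ≤ w t x) :
    ∀ t ∈ Set.Ico (0:ℝ) T, ∀ x > (0:ℝ),
      ∃ (σ : ℝ) (X : ℝ → ℝ),
        0 ≤ σ ∧ (0 < t → σ < t) ∧ (t = 0 → σ = 0) ∧
        X t = x ∧
        (∀ s ∈ Set.Ioo σ T, 0 < X s ∧ HasDerivAt X (a (X s) * w s (X s)) s) ∧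
        (t = 0 → ContinuousOn X (Set.Ico 0 T) ∧ ∀ s ∈ Set.Ico (0:ℝ) T, 0 < X s) ∧
        (∀ s ∈ Set.Ico t T, min x x₀ ≤ X s) ∧
        (0 < σ → Filter.Tendsto X (nhdsWithin σ (Set.Ioi σ)) (nhds 0)) := by
  intro t ht x hx
  classical
  have hm0 : 0 < min x x₀ := lt_min hx hx₀
  set B1 := (x + 1 + min x x₀ / 2) * Real.exp (K * T) with hB1
  set B2 := (x + 1) * Real.exp (K * T) with hB2
  set SOL : ℝ → ℝ → (ℝ → ℝ) → Prop := fun α β f =>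
    0 ≤ α ∧ t ∈ Icc α β ∧ β < T ∧ f t = x ∧ Stmt5Aux.ODEon a w α β f with hSOLdef
  -- uniqueness of anchored solutions
  have uniq2 : ∀ {α β α' β' : ℝ} {f g : ℝ → ℝ}, SOL α β f → SOL α' β' g →
      ∀ s, s ∈ Icc α β → s ∈ Icc α' β' → f s = g s := by
    intro α β α' β' f g hf hg s hs hs'
    obtain ⟨hα, htm, hβ, hfx, hodef⟩ := hf
    obtain ⟨hα', htm', hβ', hgx, hodeg⟩ := hg
    have hI1 : max α α' ≤ t := max_le htm.1 htm'.1
    have hI2 : t ≤ min β β' := le_min htm.2 htm'.2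
    have hEq := Stmt5Aux.uniqOn hT hvx hvx_cont
      (le_trans hα (le_max_left α α'))
      (lt_of_le_of_lt (min_le_left β β') hβ)
      (⟨hI1, hI2⟩ : t ∈ Icc (max α α') (min β β'))
      (hodef.mono (le_max_left _ _) (min_le_left _ _))
      (hodeg.mono (le_max_right _ _) (min_le_right _ _))
      (hfx.trans hgx.symm)
    exact hEq ⟨max_le hs.1 hs'.1, le_min hs.2 hs'.2⟩
  -- the glued-together global function
  set X : ℝ → ℝ := fun s =>
    if hs : ∃ p : ℝ × ℝ × (ℝ → ℝ), SOL p.1 p.2.1 p.2.2 ∧ s ∈ Icc p.1 p.2.1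
    then (Classical.choose hs).2.2 s else 0 with hXdef
  have keyX : ∀ {α β : ℝ} {f : ℝ → ℝ}, SOL α β f → ∀ s ∈ Icc α β, X s = f s := by
    intro α β f hsol s hs
    have hex : ∃ p : ℝ × ℝ × (ℝ → ℝ), SOL p.1 p.2.1 p.2.2 ∧ s ∈ Icc p.1 p.2.1 :=
      ⟨(α, β, f), hsol, hs⟩
    obtain ⟨hsol', hs'⟩ := Classical.choose_spec hex
    have hXs : X s = (Classical.choose hex).2.2 s := by
      simp only [hXdef]
      rw [dif_pos hex]
    rw [hXs]
    exact uniq2 hsol' hsol s hs' hs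
  -- the trivial solution at the anchor
  have hsolTriv : SOL t t (fun _ => x) := by
    refine ⟨ht.1, ⟨le_rfl, le_rfl⟩, ht.2, rfl, ?_⟩
    intro s hs
    rw [Icc_self] at hs ⊢
    rw [mem_singleton_iff] at hs
    subst hs
    exact ⟨hx, Stmt5Aux.hasDerivWithinAt_singletonR⟩
  have hXt : X t = x := by
    have := keyX (α := t) (β := t) (f := fun _ => x) hsolTriv t ⟨le_rfl, le_rfl⟩
    simpa using this
  -- forward solutions
  have hFwd : ∀ T' ∈ Ico t T, ∃ f : ℝ → ℝ, SOL t T' f ∧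
      ∀ s ∈ Icc t T', min x x₀ ≤ f s ∧ f s ≤ B1 := by
    intro T' hT'
    obtain ⟨f, hft, hprop⟩ := Stmt5Aux.forwardSol hT hK hδ hx₀ ha_cont ha_pos hw_cont hvx
      hvx_cont h_sub h_in ht hx hT'
    exact ⟨f, ⟨ht.1, ⟨le_rfl, hT'.1⟩, hT'.2, hft, fun s hs =>
      ⟨lt_of_lt_of_le hm0 (hprop s hs).1, (hprop s hs).2.2⟩⟩,
      fun s hs => ⟨(hprop s hs).1, (hprop s hs).2.1⟩⟩
  -- the set of backward starting times
  set SS : Set ℝ := {α : ℝ | ∃ f : ℝ → ℝ, SOL α t f} with hSS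
  have hSSne : SS.Nonempty := ⟨t, fun _ => x, hsolTriv⟩
  have hSSbdd : BddBelow SS := ⟨0, fun α hα => hα.choose_spec.1⟩
  set σ := sInf SS with hσdef
  have hσ0 : 0 ≤ σ := le_csInf hSSne (fun α hα => hα.choose_spec.1)
  have hσt : σ ≤ t := csInf_le hSSbdd ⟨(fun _ => x), hsolTriv⟩
  have hσltt' : 0 < t → σ < t := by
    intro ht0
    obtain ⟨τ, hτ0, hbk⟩ := Stmt5Aux.backSol hT hK ha_cont hw_cont hvx hvx_cont h_sub
      (T₁ := t) (ε := x) (Bb := x) ht.1 ht.2 hx le_rfl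
    obtain ⟨f, hf1, hf2⟩ := hbk t ⟨ht0, le_rfl⟩ x ⟨le_rfl, le_rfl⟩
    set α₁ := max 0 (t - τ) with hα₁def
    have hα₁t : α₁ < t := max_lt ht0 (by linarith)
    have hSOL1 : SOL α₁ t f := ⟨le_max_left _ _, ⟨hα₁t.le, le_rfl⟩, ht.2, hf1, fun s hs =>
      ⟨lt_of_lt_of_le (by positivity : (0:ℝ) < x/2) (hf2 s hs).1, (hf2 s hs).2.2⟩⟩
    exact lt_of_le_of_lt (csInf_le hSSbdd ⟨f, hSOL1⟩) hα₁t
  have hσeq0 : t = 0 → σ = 0 := fun h => le_antisymm (h ▸ hσt) hσ0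
  -- covering solutions around interior points
  have hcover : ∀ s ∈ Ioo σ T, ∃ (α' T' : ℝ) (h' : ℝ → ℝ), SOL α' T' h' ∧ s ∈ Ioo α' T' ∧
      (∀ u ∈ Icc α' T', X u = h' u) := by
    intro s hs
    obtain ⟨α₀, hα₀SS, hα₀s⟩ := exists_lt_of_csInf_lt hSSne hs.1
    obtain ⟨f₁, hf₁⟩ := hα₀SS
    have hmax : max s t < T := max_lt hs.2 ht.2
    set T' := (max s t + T)/2 with hT'def
    have hT'1 : max s t < T' := by simp only [hT'def]; linarith
    have hT'mem : T' ∈ Ico t T := ⟨le_trans (le_max_right s t) hT'1.le,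
      by simp only [hT'def]; linarith⟩
    obtain ⟨f₂, hf₂, hbnd⟩ := hFwd T' hT'mem
    have hα₀t : α₀ ≤ t := hf₁.2.1.1
    obtain ⟨hEq1, hEq2, hode⟩ := Stmt5Aux.glue (F := fun z y => a y * w z y)
      (⟨hα₀t, hT'mem.1⟩ : t ∈ Icc α₀ T') hf₁.2.2.2.2 hf₂.2.2.2.2
      (by rw [hf₁.2.2.2.1, hf₂.2.2.2.1])
    set h' : ℝ → ℝ := fun u => if u ≤ t then f₁ u else f₂ u with hh'def
    have hanchor : h' t = x := by
      rw [hEq1 t ⟨hα₀t, le_rfl⟩]; exact hf₁.2.2.2.1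
    have hSOL' : SOL α₀ T' h' := ⟨hf₁.1, ⟨hα₀t, hT'mem.1⟩, hT'mem.2, hanchor, hode⟩
    exact ⟨α₀, T', h', hSOL', ⟨hα₀s, lt_of_le_of_lt (le_max_left s t) hT'1⟩,
      fun u hu => keyX hSOL' u hu⟩
  -- the ODE property of X
  have hprop2 : ∀ s ∈ Ioo σ T, 0 < X s ∧ HasDerivAt X (a (X s) * w s (X s)) s := by
    intro s hs
    obtain ⟨α', T', h', hSOL', hsin, hXeq⟩ := hcover s hs
    have hXs : X s = h' s := hXeq s (Ioo_subset_Icc_self hsin)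
    have hode := hSOL'.2.2.2.2
    constructor
    · rw [hXs]; exact (hode s (Ioo_subset_Icc_self hsin)).1
    · have hd := (hode s (Ioo_subset_Icc_self hsin)).2.hasDerivAt (Icc_mem_nhds hsin.1 hsin.2)
      have hev : X =ᶠ[nhds s] h' := by
        filter_upwards [Icc_mem_nhds hsin.1 hsin.2] with u hu
        exact hXeq u hu
      have hfin := HasDerivAt.congr_of_eventuallyEq hd hev
      rw [hXs]
      exact hfin
  -- the lower bound on [t, T)
  have hpropmin : ∀ s ∈ Ico t T, min x x₀ ≤ X s := by
    intro s hs
    set T' := (s + T)/2 with hT'def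
    have hT'mem : T' ∈ Ico t T := ⟨by simp only [hT'def]; linarith [hs.1, hs.2],
      by simp only [hT'def]; linarith [hs.2]⟩
    obtain ⟨f, hSOLf, hbnd⟩ := hFwd T' hT'mem
    have hsmem : s ∈ Icc t T' := ⟨hs.1, by simp only [hT'def]; linarith [hs.2]⟩
    rw [keyX hSOLf s hsmem]
    exact (hbnd s hsmem).1
  -- the t = 0 case
  have hpropt0 : t = 0 → ContinuousOn X (Ico 0 T) ∧ ∀ s ∈ Ico (0:ℝ) T, 0 < X s := by
    intro ht0
    subst ht0
    constructor
    · intro s hs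
      set T' := (s + T)/2 with hT'def
      have hsT' : s < T' := by simp only [hT'def]; linarith [hs.2]
      have hT'mem : T' ∈ Ico (0:ℝ) T := ⟨by simp only [hT'def]; linarith [hs.1, hs.2],
        by simp only [hT'def]; linarith [hs.2]⟩
      obtain ⟨f, hSOLf, hbnd⟩ := hFwd T' hT'mem
      have hsmem : s ∈ Icc (0:ℝ) T' := ⟨hs.1, hsT'.le⟩
      have hfc : ContinuousWithinAt f (Icc (0:ℝ) T') s :=
        hSOLf.2.2.2.2.continuousOn s hsmem
      have hmem : Icc (0:ℝ) T' ∈ nhdsWithin s (Ico 0 T) := by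
        filter_upwards [mem_nhdsWithin_of_mem_nhds (Iic_mem_nhds hsT'), self_mem_nhdsWithin]
          with u hu1 hu2
        exact ⟨hu2.1, hu1⟩
      have hfc2 : ContinuousWithinAt f (Ico 0 T) s := hfc.mono_of_mem_nhdsWithin hmem
      apply hfc2.congr_of_eventuallyEq ?_ (keyX hSOLf s hsmem)
      filter_upwards [hmem] with u hu
      exact keyX hSOLf u hu
    · intro s hs
      rcases eq_or_lt_of_le hs.1 with h0 | h0
      · rw [← h0, hXt]; exact hx
      · have hσ00 : σ = 0 := hσeq0 rfl
        exact (hprop2 s ⟨hσ00 ▸ h0, hs.2⟩).1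
  -- bounds on the backward part
  have hXB : ∀ s ∈ Ioc σ t, 0 < X s ∧ X s ≤ B2 := by
    intro s hs
    obtain ⟨α₀, hα₀SS, hα₀s⟩ := exists_lt_of_csInf_lt hSSne hs.1
    obtain ⟨f, hSOLf⟩ := hα₀SS
    have hsmem : s ∈ Icc α₀ t := ⟨hα₀s.le, hs.2⟩
    rw [keyX hSOLf s hsmem]
    refine ⟨(hSOLf.2.2.2.2 s hsmem).1, ?_⟩
    have hbb := Stmt5Aux.backBound hK h_sub hSOLf.1 ht hSOLf.2.1.1 hSOLf.2.2.2.2 s hsmem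
    rwa [hSOLf.2.2.2.1] at hbb
  -- backward invariance of sublevels
  have hsub2 : ∀ c, c ≤ x₀ → ∀ s₂ ∈ Ioc σ t, X s₂ < c → ∀ s ∈ Ioc σ s₂, X s < c := by
    intro c hc s₂ hs₂ hXs₂ s hs
    by_contra hge
    push_neg at hge
    obtain ⟨α₀, hα₀SS, hα₀s⟩ := exists_lt_of_csInf_lt hSSne hs.1
    obtain ⟨f, hSOLf⟩ := hα₀SS
    have hode := hSOLf.2.2.2.2
    have hsmem : s ∈ Icc α₀ t := ⟨hα₀s.le, le_trans hs.2 hs₂.2⟩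
    have hs₂mem : s₂ ∈ Icc α₀ t := ⟨le_trans hα₀s.le hs.2, hs₂.2⟩
    have hbar := Stmt5Aux.barrier (g := f) (d := fun z => a (f z) * w z (f z))
      (p := s) (q := s₂) (c := c)
      (hode.continuousOn.mono (Icc_subset_Icc hsmem.1 hs₂mem.2))
      (fun z hz => by
        have hzmem : z ∈ Icc α₀ t := ⟨le_trans hsmem.1 hz.1.le, le_trans hz.2.le hs₂mem.2⟩
        exact (hode z hzmem).2.hasDerivAt
          (Icc_mem_nhds (lt_of_lt_of_le hα₀s hz.1.le) (lt_of_lt_of_le hz.2 hs₂mem.2)))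
      (fun z hz hfz => by
        have hzmem : z ∈ Icc α₀ t := ⟨le_trans hsmem.1 hz.1.le, le_trans hz.2.le hs₂mem.2⟩
        have hzIco : z ∈ Ico (0:ℝ) T :=
          ⟨le_trans hSOLf.1 hzmem.1, lt_of_le_of_lt hzmem.2 ht.2⟩
        exact mul_pos (ha_pos _ (hode z hzmem).1)
          (lt_of_lt_of_le hδ (h_in z hzIco _ ⟨(hode z hzmem).1, lt_of_lt_of_le hfz hc⟩)))
      (by rw [← keyX hSOLf s hsmem]; exact hge)
    have hfin := hbar s₂ ⟨hs.2, le_rfl⟩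
    rw [← keyX hSOLf s₂ hs₂mem] at hfin
    linarith
  -- reaching arbitrarily small values near σ
  have hsub1 : 0 < σ → ∀ c, 0 < c → ∃ s₂ ∈ Ioc σ t, X s₂ < c := by
    intro hσpos c hcpos
    by_contra hcon
    push_neg at hcon
    have htpos : 0 < t := lt_of_lt_of_le hσpos hσt
    have hσltt := hσltt' htpos
    have hcB2 : c ≤ B2 := le_trans (hcon t ⟨hσltt, le_rfl⟩) (hXB t ⟨hσltt, le_rfl⟩).2
    obtain ⟨τ, hτ0, hbk⟩ := Stmt5Aux.backSol hT hK ha_cont hw_cont hvx hvx_cont h_sub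
      (T₁ := t) (ε := c) (Bb := B2) ht.1 ht.2 hcpos hcB2
    set s₁ := min t (σ + τ/2) with hs₁def
    have hs₁σ : σ < s₁ := lt_min hσltt (by linarith)
    have hs₁t : s₁ ≤ t := min_le_left _ _
    have hs₁0 : 0 < s₁ := lt_of_le_of_lt hσ0 hs₁σ
    have hy₁mem : X s₁ ∈ Icc c B2 := ⟨hcon s₁ ⟨hs₁σ, hs₁t⟩, (hXB s₁ ⟨hs₁σ, hs₁t⟩).2⟩
    obtain ⟨g, hg1, hg2⟩ := hbk s₁ ⟨hs₁0, hs₁t⟩ (X s₁) hy₁mem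
    set α₁ := max 0 (s₁ - τ) with hα₁def
    have hα₁σ : α₁ < σ := max_lt hσpos (by
      have hmin : s₁ ≤ σ + τ/2 := min_le_right _ _
      linarith)
    obtain ⟨α₀, hα₀SS, hα₀s₁⟩ := exists_lt_of_csInf_lt hSSne hs₁σ
    obtain ⟨f, hSOLf⟩ := hα₀SS
    have hXf : X s₁ = f s₁ := keyX hSOLf s₁ ⟨hα₀s₁.le, hs₁t⟩
    have hode_g : ∀ u ∈ Icc α₁ s₁, 0 < g u ∧
        HasDerivWithinAt g (a (g u) * w u (g u)) (Icc α₁ s₁) u :=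
      fun u hu => ⟨lt_of_lt_of_le (by positivity : (0:ℝ) < c/2) (hg2 u hu).1, (hg2 u hu).2.2⟩
    have hode_f' : Stmt5Aux.ODEon a w s₁ t f := hSOLf.2.2.2.2.mono hα₀s₁.le le_rfl
    have hα₁s₁ : α₁ ≤ s₁ := max_le hs₁0.le (by linarith)
    obtain ⟨hE1, hE2, hodeH⟩ := Stmt5Aux.glue (F := fun z y => a y * w z y)
      (⟨hα₁s₁, hs₁t⟩ : s₁ ∈ Icc α₁ t) hode_g hode_f' (hg1.trans hXf)
    set H : ℝ → ℝ := fun u => if u ≤ s₁ then g u else f u with hHdef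
    have hHt : H t = x := by
      rw [hE2 t ⟨hs₁t, le_rfl⟩]; exact hSOLf.2.2.2.1
    have hSOLH : SOL α₁ t H :=
      ⟨le_max_left _ _, ⟨le_trans hα₁s₁ hs₁t, le_rfl⟩, ht.2, hHt, hodeH⟩
    have hfin : σ ≤ α₁ := csInf_le hSSbdd ⟨H, hSOLH⟩
    linarith
  -- the boundary limit
  have htend : 0 < σ → Filter.Tendsto X (nhdsWithin σ (Set.Ioi σ)) (nhds 0) := by
    intro hσpos
    rw [Metric.tendsto_nhds]
    intro ε hε
    set c := min ε x₀ / 2 with hcdef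
    have hc0 : 0 < c := by
      have := lt_min hε hx₀
      simp only [hcdef]
      linarith
    have hcx₀ : c ≤ x₀ := by
      have := min_le_right ε x₀
      simp only [hcdef]
      linarith
    have hcε : c < ε := by
      have := min_le_left ε x₀
      simp only [hcdef]
      linarith
    obtain ⟨s₂, hs₂, hXs₂⟩ := hsub1 hσpos c hc0
    have hall := hsub2 c hcx₀ s₂ hs₂ hXs₂
    filter_upwards [Ioc_mem_nhdsGT_of_mem (⟨le_rfl, hs₂.1⟩ : σ ∈ Ico σ s₂)] with u hu
    have hu' : u ∈ Ioc σ t := ⟨hu.1, le_trans hu.2 hs₂.2⟩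
    have hpos := (hXB u hu').1
    have hlt : X u < c := hall u hu
    rw [Real.dist_eq, sub_zero, abs_of_pos hpos]
    linarith
  exact ⟨σ, X, hσ0, hσltt', hσeq0, hXt, hprop2, hpropt0, hpropmin, htend⟩
end

section
/- Under assumptions (A1)–(A7), for 0 < s₁ < s₂ < t < T we have X(t;s₂,0⁺) < X(t;s₁,0⁺): characteristic curves emanating from the boundary at later times lie strictly below those emanating earlier. -/
open MeasureTheory Set Filter

/-- The setting of the linear annex: a degenerate transport field `v = a·w` on
`[0,T) × (0,∞)` satisfying assumptions (A1)–(A7), together with its characteristic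
flow `X s t x` (position at time `s` of the characteristic through `(t,x)`) and the
backward-lifetime map `σ t x = inf Σ_{t,x}`. -/
structure LSFlow where
  T : ℝ
  K : ℝ
  δ : ℝ
  x₀ : ℝ
  a : ℝ → ℝ
  w : ℝ → ℝ → ℝ
  wx : ℝ → ℝ → ℝ
  X : ℝ → ℝ → ℝ → ℝ
  σ : ℝ → ℝ → ℝ
  hT : 0 < T
  hK : 0 < K
  hδ : 0 < δ
  hx₀ : 0 < x₀
  /-- (A3) `a` is continuous on `[0,∞)` -/
  ha_cont : ContinuousOn a (Set.Ici 0)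
  /-- (A3) `a` is positive on `(0,∞)` -/
  ha_pos : ∀ x > (0:ℝ), 0 < a x
  /-- (A5) `1/a` is integrable near the origin -/
  ha_int : MeasureTheory.IntegrableOn (fun y => 1 / a y) (Set.Ioo 0 1)
  /-- (A5) the primitive of `1/a` diverges at infinity -/
  ha_div : Filter.Tendsto (fun x => ∫ y in Set.Ioo (0:ℝ) x, 1 / a y)
    Filter.atTop Filter.atTop
  /-- (A4) `w` is continuous on `[0,T) × [0,∞)` -/
  hw_cont : ContinuousOn (fun p : ℝ × ℝ => w p.1 p.2) (Set.Ico 0 T ×ˢ Set.Ici 0)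
  /-- (A4) `wx` is the partial derivative of `w` in the space variable -/
  hwx : ∀ t ∈ Set.Ioo (0:ℝ) T, ∀ x > (0:ℝ), HasDerivAt (w t) (wx t x) x
  /-- (A6) `∂ₓ w ∈ L¹((0,T) × (0,1))` -/
  hwx_int : MeasureTheory.IntegrableOn (fun p : ℝ × ℝ => wx p.1 p.2)
    (Set.Ioo 0 T ×ˢ Set.Ioo 0 1)
  /-- (A1) sublinearity of the field `v = a·w` -/
  h_sub : ∀ t ∈ Set.Ico (0:ℝ) T, ∀ x > (0:ℝ), |a x * w t x| ≤ K * (1 + x)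
  /-- (A7) inward flow near the boundary -/
  h_in : ∀ t ∈ Set.Ico (0:ℝ) T, ∀ x ∈ Set.Ioo (0:ℝ) x₀, δ ≤ w t x
  /-- backward lifetimes are nonnegative -/
  hσ_nonneg : ∀ t x, 0 ≤ σ t x
  hσ_le : ∀ t x, σ t x ≤ t
  hσ_lt : ∀ t x, 0 < t → 0 < x → σ t x < t
  /-- the characteristic through `(t,x)` passes through `x` at time `t` -/
  h_init : ∀ t ∈ Set.Ico (0:ℝ) T, ∀ x > (0:ℝ), X t t x = x
  /-- positivity of characteristics on their maximal interval `(σ t x, T)` -/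
  h_pos : ∀ t ∈ Set.Ico (0:ℝ) T, ∀ x > (0:ℝ), ∀ s ∈ Set.Ioo (σ t x) T, 0 < X s t x
  /-- the ODE `∂ₛ X = a(X) w(s, X)` on the maximal interval -/
  h_ode : ∀ t ∈ Set.Ico (0:ℝ) T, ∀ x > (0:ℝ), ∀ s ∈ Set.Ioo (σ t x) T,
    HasDerivAt (fun r => X r t x) (a (X s t x) * w s (X s t x)) s
  /-- maximality: when `σ t x > 0` the characteristic reaches the boundary -/
  h_max : ∀ t ∈ Set.Ico (0:ℝ) T, ∀ x > (0:ℝ), 0 < σ t x →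
    Filter.Tendsto (fun s => X s t x) (nhdsWithin (σ t x) (Set.Ioi (σ t x))) (nhds 0)
  /-- semigroup property / uniqueness of characteristics -/
  h_semigroup : ∀ t ∈ Set.Ico (0:ℝ) T, ∀ x > (0:ℝ), ∀ s ∈ Set.Ioo (σ t x) T,
    s ∈ Set.Ico (0:ℝ) T → σ s (X s t x) = σ t x ∧
      ∀ r ∈ Set.Ioo (σ t x) T, X r s (X s t x) = X r t x

/-- The separating point `x_c(t)` between characteristics coming from the initial
data and those emanating from the boundary. -/
noncomputable def LSFlow.xc (F : LSFlow) (t : ℝ) : ℝ :=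
  sInf {x : ℝ | 0 < x ∧ F.σ t x = 0}

namespace LSAux

noncomputable def Af (F : LSFlow) (x : ℝ) : ℝ := ∫ y in (0:ℝ)..x, 1 / F.a y

lemma hlin (c r : ℝ) : HasDerivAt (fun s : ℝ => c * s) c r := by
  simpa using (hasDerivAt_id r).const_mul c

variable (F : LSFlow)

lemma inva_contAt {x : ℝ} (hx : 0 < x) : ContinuousAt (fun y => 1 / F.a y) x := by
  have ha : ContinuousAt F.a x :=
    (F.ha_cont x (le_of_lt hx)).continuousAt (Ici_mem_nhds hx)
  exact continuousAt_const.div ha (ne_of_gt (F.ha_pos x hx))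

lemma inva_nonneg : ∀ y ∈ Icc (0:ℝ) 1, 0 ≤ 1 / F.a y := by
  rintro y ⟨hy0, _⟩
  rcases eq_or_lt_of_le hy0 with h | h
  · have h0 : 0 ≤ F.a 0 := by
      have htend : Tendsto F.a (nhdsWithin 0 (Ioi 0)) (nhds (F.a 0)) :=
        ((F.ha_cont 0 Set.self_mem_Ici).tendsto).mono_left
          (nhdsWithin_mono _ (fun z hz => Set.mem_Ici.2 (le_of_lt hz)))
      exact ge_of_tendsto htend
        (eventually_nhdsWithin_of_forall (fun z hz => (F.ha_pos z hz).le))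
    rw [← h]
    positivity
  · exact le_of_lt (div_pos one_pos (F.ha_pos y h))

lemma inva_intOn {x : ℝ} (hx0 : 0 ≤ x) (hx : x ≤ 1) :
    IntervalIntegrable (fun y => 1 / F.a y) volume 0 x :=
  (intervalIntegrable_iff_integrableOn_Ioo_of_le hx0).2
    (F.ha_int.mono_set (Ioo_subset_Ioo le_rfl hx))

lemma Af_pos {x : ℝ} (hx : 0 < x) (hx1 : x ≤ 1) : 0 < Af F x :=
  intervalIntegral.intervalIntegral_pos_of_pos_on (inva_intOn F hx.le hx1)
    (fun y hy => div_pos one_pos (F.ha_pos y hy.1)) hx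

lemma Af_contOn : ContinuousOn (Af F) (Icc 0 1) := by
  have h : IntegrableOn (fun y => 1 / F.a y) (uIcc (0:ℝ) 1) := by
    rw [uIcc_of_le (zero_le_one), integrableOn_Icc_iff_integrableOn_Ioo]
    exact F.ha_int
  have := intervalIntegral.continuousOn_primitive_interval (a := (0:ℝ)) (b := 1)
    (μ := volume) (f := fun y => 1 / F.a y) h
  rwa [uIcc_of_le zero_le_one] at this

lemma Af_zero : Af F 0 = 0 := intervalIntegral.integral_same

lemma Af_tendsto : Tendsto (Af F) (nhdsWithin 0 (Icc 0 1)) (nhds 0) := by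
  have := (Af_contOn F 0 ⟨le_rfl, zero_le_one⟩)
  rw [ContinuousWithinAt, Af_zero] at this
  exact this

lemma Af_deriv {x : ℝ} (hx : x ∈ Ioo (0:ℝ) 1) : HasDerivAt (Af F) (1 / F.a x) x := by
  apply intervalIntegral.integral_hasDerivAt_right (inva_intOn F hx.1.le hx.2.le)
  · refine ContinuousOn.stronglyMeasurableAtFilter (s := Ioi (0:ℝ)) isOpen_Ioi ?_ x hx.1
    exact fun y hy => (inva_contAt F hy).continuousWithinAt
  · exact inva_contAt F hx.1

/-- `Af` is eventually small near `0⁺`. -/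
lemma eventually_small {m ε : ℝ} (hm : 0 < m) (hm1 : m ≤ 1) (hε : 0 < ε) :
    ∀ᶠ x in nhdsWithin (0:ℝ) (Ioi 0), x < m ∧ Af F x < ε := by
  have h1 : ∀ᶠ x in nhdsWithin (0:ℝ) (Icc 0 1), Af F x < ε :=
    ((Af_tendsto F).eventually (Filter.Tendsto.eventually_lt_const hε tendsto_id)) |>.mono
      (fun x hx => hx)
  rw [eventually_nhdsWithin_iff] at h1
  have h2 : ∀ᶠ x in nhdsWithin (0:ℝ) (Ioi 0), x < m := by
    apply eventually_nhdsWithin_of_eventually_nhds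
    exact eventually_lt_nhds hm
  have h3 : ∀ᶠ x in nhdsWithin (0:ℝ) (Ioi 0), (x ∈ Icc (0:ℝ) 1 → Af F x < ε) :=
    eventually_nhdsWithin_of_eventually_nhds h1
  filter_upwards [h2, h3, eventually_mem_nhdsWithin] with x hxm hximp hx0
  exact ⟨hxm, hximp ⟨le_of_lt hx0, le_of_lt (lt_of_lt_of_le hxm hm1)⟩⟩


/-- Positive derivative of the characteristic while it lies in the inward region. -/
lemma deriv_pos {t' x : ℝ} (ht' : t' ∈ Ico (0:ℝ) F.T) (hx : 0 < x) {r : ℝ}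
    (hr : r ∈ Ioo (F.σ t' x) F.T) (hr0 : 0 ≤ r)
    (hXr : F.X r t' x ∈ Ioo 0 F.x₀) : 0 < deriv (fun s => F.X s t' x) r := by
  rw [(F.h_ode t' ht' x hx r hr).deriv]
  exact mul_pos (F.ha_pos _ hXr.1)
    (lt_of_lt_of_le F.hδ (F.h_in r ⟨hr0, hr.2⟩ _ hXr))

lemma Xcont {t' x : ℝ} (ht' : t' ∈ Ico (0:ℝ) F.T) (hx : 0 < x) {r : ℝ}
    (hr : r ∈ Ioo (F.σ t' x) F.T) : ContinuousAt (fun s => F.X s t' x) r :=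
  (F.h_ode t' ht' x hx r hr).continuousAt

/-- Once a characteristic reaches the level `x₀` it never goes below it again. -/
lemma no_return {t' x r₀ r₁ : ℝ} (ht' : t' ∈ Ico (0:ℝ) F.T) (hx : 0 < x)
    (hr₀ : r₀ ∈ Ioo (F.σ t' x) F.T) (hr₁ : r₁ ∈ Ioo (F.σ t' x) F.T)
    (h01 : r₀ ≤ r₁) (hX0 : F.x₀ ≤ F.X r₀ t' x) : F.x₀ ≤ F.X r₁ t' x := by
  by_contra hcon
  push_neg at hcon
  have hr01 : r₀ < r₁ := by
    rcases eq_or_lt_of_le h01 with rfl | h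
    · exact absurd hX0 (not_le.2 hcon)
    · exact h
  set S : Set ℝ := {r | r ∈ Icc r₀ r₁ ∧ F.x₀ ≤ F.X r t' x} with hS
  have hne : S.Nonempty := ⟨r₀, ⟨le_rfl, h01⟩, hX0⟩
  have hbdd : BddAbove S := ⟨r₁, fun r hr => hr.1.2⟩
  set c := sSup S with hc
  have hcmem : c ∈ Icc r₀ r₁ :=
    ⟨le_csSup hbdd ⟨⟨le_rfl, h01⟩, hX0⟩, csSup_le hne (fun r hr => hr.1.2)⟩
  have hsub : Icc r₀ r₁ ⊆ Ioo (F.σ t' x) F.T := fun r hr =>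
    ⟨lt_of_lt_of_le hr₀.1 hr.1, lt_of_le_of_lt hr.2 hr₁.2⟩
  have hXc : F.x₀ ≤ F.X c t' x := by
    by_contra hXc
    push_neg at hXc
    have hcont := Xcont F ht' hx (hsub hcmem)
    have hev : ∀ᶠ r in nhds c, F.X r t' x < F.x₀ :=
      hcont.eventually (eventually_lt_nhds hXc)
    rw [Metric.eventually_nhds_iff] at hev
    obtain ⟨ε, hε, hevε⟩ := hev
    have : ∀ r ∈ S, r ≤ c - ε / 2 := by
      intro r hr
      by_contra hrc
      push_neg at hrc
      have h1 : r ≤ c := le_csSup hbdd hr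
      have : dist r c < ε := by
        rw [Real.dist_eq, abs_lt]; constructor <;> linarith
      exact absurd (hevε this) (not_lt.2 hr.2)
    have := csSup_le hne this
    linarith
  have hcr₁ : c < r₁ := lt_of_le_of_ne hcmem.2 (fun h => by
    rw [h] at hXc; linarith)
  -- On `(c, r₁]` the curve is below `x₀`, hence strictly increasing on `[c, r₁]`.
  have hlt : ∀ r ∈ Ioc c r₁, F.X r t' x < F.x₀ := by
    intro r hr
    by_contra hge
    push_neg at hge
    have hrS : r ∈ S := ⟨⟨le_trans hcmem.1 hr.1.le, hr.2⟩, hge⟩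
    exact absurd (le_csSup hbdd hrS) (not_le.2 hr.1)
  have hsm : StrictMonoOn (fun s => F.X s t' x) (Icc c r₁) := by
    apply strictMonoOn_of_deriv_pos (convex_Icc _ _)
    · intro r hr
      exact (Xcont F ht' hx (hsub ⟨le_trans hcmem.1 hr.1, hr.2⟩)).continuousWithinAt
    · intro r hr
      rw [interior_Icc] at hr
      have hrI : r ∈ Ioo (F.σ t' x) F.T := hsub ⟨le_trans hcmem.1 hr.1.le, hr.2.le⟩
      have hr0 : 0 ≤ r := le_trans (F.hσ_nonneg t' x) (le_of_lt hrI.1)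
      exact deriv_pos F ht' hx hrI hr0
        ⟨F.h_pos t' ht' x hx r hrI, hlt r ⟨hr.1, hr.2.le⟩⟩
  have := hsm ⟨le_rfl, hcmem.2⟩ ⟨hcmem.2, le_rfl⟩ hcr₁
  simp only at this
  linarith


/-- Backward from `(t',x)` with `x < x₀` the characteristic stays in `(0, x]`. -/
lemma stay_below {t' x : ℝ} (ht'0 : 0 < t') (ht' : t' ∈ Ico (0:ℝ) F.T)
    (hx : 0 < x) (hxx₀ : x < F.x₀) :
    ∀ r ∈ Ioc (F.σ t' x) t',
      0 < F.X r t' x ∧ F.X r t' x < F.x₀ ∧ F.X r t' x ≤ x := by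
  have hσ : F.σ t' x < t' := F.hσ_lt t' x ht'0 hx
  have ht'I : t' ∈ Ioo (F.σ t' x) F.T := ⟨hσ, ht'.2⟩
  have hinit : F.X t' t' x = x := F.h_init t' ht' x hx
  have hsub : ∀ r ∈ Ioc (F.σ t' x) t', r ∈ Ioo (F.σ t' x) F.T := fun r hr =>
    ⟨hr.1, lt_of_le_of_lt hr.2 ht'.2⟩
  have hbelow : ∀ r ∈ Ioc (F.σ t' x) t', F.X r t' x < F.x₀ := by
    intro r hr
    by_contra hge
    push_neg at hge
    have := no_return F ht' hx (hsub r hr) ht'I hr.2 hge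
    rw [hinit] at this; linarith
  intro r hr
  refine ⟨F.h_pos t' ht' x hx r (hsub r hr), hbelow r hr, ?_⟩
  rcases eq_or_lt_of_le hr.2 with rfl | hrt'
  · rw [hinit]
  · have hsm : StrictMonoOn (fun s => F.X s t' x) (Icc r t') := by
      apply strictMonoOn_of_deriv_pos (convex_Icc _ _)
      · intro u hu
        exact (Xcont F ht' hx (hsub u ⟨lt_of_lt_of_le hr.1 hu.1, hu.2⟩)).continuousWithinAt
      · intro u hu
        rw [interior_Icc] at hu
        have huI : u ∈ Ioc (F.σ t' x) t' := ⟨lt_of_lt_of_le hr.1 hu.1.le, hu.2.le⟩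
        exact deriv_pos F ht' hx (hsub u huI)
          (le_trans (F.hσ_nonneg t' x) huI.1.le)
          ⟨F.h_pos t' ht' x hx u (hsub u huI), hbelow u huI⟩
    have := hsm ⟨le_rfl, hr.2⟩ ⟨hr.2, le_rfl⟩ hrt'
    simp only at this
    rw [hinit] at this
    exact this.le

/-- Derivative of `Af ∘ X` along the characteristic. -/
lemma Af_comp_deriv {t' x : ℝ} (ht'0 : 0 < t') (ht' : t' ∈ Ico (0:ℝ) F.T)
    (hx : 0 < x) (hxm : x < min F.x₀ 1) {r : ℝ} (hr : r ∈ Ioc (F.σ t' x) t') :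
    HasDerivAt (fun s => Af F (F.X s t' x)) (F.w r (F.X r t' x)) r := by
  have hxx₀ : x < F.x₀ := lt_of_lt_of_le hxm (min_le_left _ _)
  have hX := stay_below F ht'0 ht' hx hxx₀ r hr
  have hrI : r ∈ Ioo (F.σ t' x) F.T := ⟨hr.1, lt_of_le_of_lt hr.2 ht'.2⟩
  have hXmem : F.X r t' x ∈ Ioo (0:ℝ) 1 :=
    ⟨hX.1, lt_of_le_of_lt hX.2.2 (lt_of_lt_of_le hxm (min_le_right _ _))⟩
  have hA := Af_deriv F hXmem
  have hchain := HasDerivAt.comp r hA (F.h_ode t' ht' x hx r hrI)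
  have heq : 1 / F.a (F.X r t' x) * (F.a (F.X r t' x) * F.w r (F.X r t' x))
      = F.w r (F.X r t' x) := by
    field_simp [ne_of_gt (F.ha_pos _ hXmem.1)]
  rw [heq] at hchain
  exact hchain

/-- Lower bound on the backward lifetime. -/
lemma sigma_lower {t' x : ℝ} (ht'0 : 0 < t') (ht' : t' ∈ Ico (0:ℝ) F.T)
    (hx : 0 < x) (hxm : x < min F.x₀ 1) :
    F.δ * (t' - F.σ t' x) ≤ Af F x := by
  have hxx₀ : x < F.x₀ := lt_of_lt_of_le hxm (min_le_left _ _)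
  have hσ : F.σ t' x < t' := F.hσ_lt t' x ht'0 hx
  have hinit : F.X t' t' x = x := F.h_init t' ht' x hx
  -- monotone auxiliary function
  have hmono : MonotoneOn (fun r => Af F (F.X r t' x) - F.δ * r) (Ioc (F.σ t' x) t') := by
    apply monotoneOn_of_deriv_nonneg (convex_Ioc _ _)
    · intro r hr
      exact ((Af_comp_deriv F ht'0 ht' hx hxm hr).sub
        (hlin F.δ r)).continuousAt.continuousWithinAt
    · intro r hr
      rw [interior_Ioc] at hr
      exact (((Af_comp_deriv F ht'0 ht' hx hxm ⟨hr.1, hr.2.le⟩).sub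
        (hlin F.δ r)).differentiableAt).differentiableWithinAt
    · intro r hr
      rw [interior_Ioc] at hr
      have hrI : r ∈ Ioc (F.σ t' x) t' := ⟨hr.1, hr.2.le⟩
      rw [HasDerivAt.deriv (f := fun r => Af F (F.X r t' x) - F.δ * r)
        ((Af_comp_deriv F ht'0 ht' hx hxm hrI).sub
        (hlin F.δ r))]
      have hX := stay_below F ht'0 ht' hx hxx₀ r hrI
      have hδw : F.δ ≤ F.w r (F.X r t' x) :=
        F.h_in r ⟨le_trans (F.hσ_nonneg t' x) hr.1.le, lt_trans hr.2 ht'.2⟩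
          _ ⟨hX.1, hX.2.1⟩
      linarith
  have key : ∀ r ∈ Ioo (F.σ t' x) t', F.δ * (t' - r) ≤ Af F x := by
    intro r hr
    have h1 := hmono ⟨hr.1, hr.2.le⟩ ⟨hσ, le_rfl⟩ hr.2.le
    simp only [hinit] at h1
    have hX := stay_below F ht'0 ht' hx hxx₀ r ⟨hr.1, hr.2.le⟩
    have hA0 : 0 ≤ Af F (F.X r t' x) :=
      (Af_pos F hX.1 (le_of_lt (lt_of_le_of_lt hX.2.2
        (lt_of_lt_of_le hxm (min_le_right _ _))))).le
    nlinarith [F.hδ]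
  -- pass to the limit r → σ⁺
  have hlim : Tendsto (fun r => F.δ * (t' - r)) (nhdsWithin (F.σ t' x) (Ioi (F.σ t' x)))
      (nhds (F.δ * (t' - F.σ t' x))) :=
    ((tendsto_const_nhds.sub (tendsto_id.mono_left nhdsWithin_le_nhds)).const_mul F.δ)
  refine le_of_tendsto hlim ?_
  filter_upwards [Ioo_mem_nhdsGT_of_mem ⟨le_rfl, hσ⟩] with r hr
  exact key r hr

/-- Upper bound on the backward lifetime (needs `σ > 0` to use maximality). -/
lemma sigma_upper {t' x W : ℝ} (ht'0 : 0 < t') (ht' : t' ∈ Ico (0:ℝ) F.T)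
    (hx : 0 < x) (hxm : x < min F.x₀ 1) (hσpos : 0 < F.σ t' x)
    (hW : ∀ r ∈ Icc (0:ℝ) t', ∀ p ∈ Icc (0:ℝ) (min F.x₀ 1), F.w r p ≤ W) :
    Af F x ≤ W * (t' - F.σ t' x) := by
  have hxx₀ : x < F.x₀ := lt_of_lt_of_le hxm (min_le_left _ _)
  have hσ : F.σ t' x < t' := F.hσ_lt t' x ht'0 hx
  have hinit : F.X t' t' x = x := F.h_init t' ht' x hx
  have hwle : ∀ r ∈ Ioc (F.σ t' x) t', F.w r (F.X r t' x) ≤ W := by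
    intro r hr
    have hX := stay_below F ht'0 ht' hx hxx₀ r hr
    exact hW r ⟨le_trans (F.hσ_nonneg t' x) hr.1.le, hr.2⟩ _
      ⟨hX.1.le, le_trans hX.2.2 (le_of_lt hxm)⟩
  have hmono : MonotoneOn (fun r => W * r - Af F (F.X r t' x)) (Ioc (F.σ t' x) t') := by
    apply monotoneOn_of_deriv_nonneg (convex_Ioc _ _)
    · intro r hr
      exact ((hlin W r).sub
        (Af_comp_deriv F ht'0 ht' hx hxm hr)).continuousAt.continuousWithinAt
    · intro r hr
      rw [interior_Ioc] at hr
      exact (((hlin W r).sub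
        (Af_comp_deriv F ht'0 ht' hx hxm ⟨hr.1, hr.2.le⟩)).differentiableAt).differentiableWithinAt
    · intro r hr
      rw [interior_Ioc] at hr
      have hrI : r ∈ Ioc (F.σ t' x) t' := ⟨hr.1, hr.2.le⟩
      rw [HasDerivAt.deriv (f := fun r => W * r - Af F (F.X r t' x))
        ((hlin W r).sub
        (Af_comp_deriv F ht'0 ht' hx hxm hrI))]
      have := hwle r hrI
      linarith
  have key : ∀ r ∈ Ioo (F.σ t' x) t', Af F x ≤ Af F (F.X r t' x) + W * (t' - r) := by
    intro r hr
    have h1 := hmono ⟨hr.1, hr.2.le⟩ ⟨hσ, le_rfl⟩ hr.2.le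
    simp only [hinit] at h1
    linarith
  -- `Af (X r) → 0` as `r → σ⁺`
  have hmax := F.h_max t' ht' x hx hσpos
  have hXin : ∀ᶠ r in nhdsWithin (F.σ t' x) (Ioi (F.σ t' x)),
      F.X r t' x ∈ Icc (0:ℝ) 1 := by
    filter_upwards [Ioo_mem_nhdsGT_of_mem ⟨le_rfl, hσ⟩] with r hr
    have hX := stay_below F ht'0 ht' hx hxx₀ r ⟨hr.1, hr.2.le⟩
    exact ⟨hX.1.le, le_trans hX.2.2 (le_of_lt (lt_of_lt_of_le hxm
      (le_trans (min_le_right _ _) le_rfl)))⟩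
  have hAf0 : Tendsto (fun r => Af F (F.X r t' x))
      (nhdsWithin (F.σ t' x) (Ioi (F.σ t' x))) (nhds 0) :=
    (Af_tendsto F).comp
      (tendsto_nhdsWithin_of_tendsto_nhds_of_eventually_within _ hmax hXin)
  have hlim : Tendsto (fun r => Af F (F.X r t' x) + W * (t' - r))
      (nhdsWithin (F.σ t' x) (Ioi (F.σ t' x)))
      (nhds (0 + W * (t' - F.σ t' x))) :=
    hAf0.add ((tendsto_const_nhds.sub (tendsto_id.mono_left nhdsWithin_le_nhds)).const_mul W)
  rw [zero_add] at hlim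
  refine ge_of_tendsto hlim ?_
  filter_upwards [Ioo_mem_nhdsGT_of_mem ⟨le_rfl, hσ⟩] with r hr
  exact key r hr


/-- Characteristics with distinct backward lifetimes stay strictly ordered. -/
lemma compare {t₁ x₁ t₂ x₂ t : ℝ} (ht₁ : t₁ ∈ Ico (0:ℝ) F.T)
    (ht₂ : t₂ ∈ Ico (0:ℝ) F.T) (hx₁ : 0 < x₁) (hx₂ : 0 < x₂)
    (hσσ : F.σ t₁ x₁ < F.σ t₂ x₂) (hσ₂ : 0 < F.σ t₂ x₂)
    (ht : t ∈ Ioo (F.σ t₂ x₂) F.T) :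
    F.X t t₂ x₂ < F.X t t₁ x₁ := by
  set σ₁ := F.σ t₁ x₁ with hσ₁def
  set σ₂ := F.σ t₂ x₂ with hσ₂def
  set g : ℝ → ℝ := fun r => F.X r t₁ x₁ - F.X r t₂ x₂ with hg
  have hsub1 : ∀ r ∈ Ioo σ₂ F.T, r ∈ Ioo σ₁ F.T := fun r hr => ⟨lt_trans hσσ hr.1, hr.2⟩
  -- g never vanishes on (σ₂, T)
  have hne : ∀ r ∈ Ioo σ₂ F.T, g r ≠ 0 := by
    intro r hr h0
    have hrIco : r ∈ Ico (0:ℝ) F.T := ⟨le_trans hσ₂.le hr.1.le, hr.2⟩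
    have hp : 0 < F.X r t₂ x₂ := F.h_pos t₂ ht₂ x₂ hx₂ r hr
    have heq : F.X r t₁ x₁ = F.X r t₂ x₂ := by
      have : F.X r t₁ x₁ - F.X r t₂ x₂ = 0 := h0
      linarith
    have h1 := (F.h_semigroup t₁ ht₁ x₁ hx₁ r (hsub1 r hr) hrIco).1
    have h2 := (F.h_semigroup t₂ ht₂ x₂ hx₂ r hr hrIco).1
    rw [heq] at h1
    rw [h1] at h2
    rw [← hσ₁def, ← hσ₂def] at h2
    linarith
  -- continuity of g on (σ₂, T)
  have hcont : ∀ r ∈ Ioo σ₂ F.T, ContinuousAt g r := fun r hr =>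
    (Xcont F ht₁ hx₁ (hsub1 r hr)).sub (Xcont F ht₂ hx₂ hr)
  -- near σ₂⁺, g is positive
  have hq : 0 < F.X σ₂ t₁ x₁ :=
    F.h_pos t₁ ht₁ x₁ hx₁ σ₂ ⟨hσσ, lt_trans ht.1 ht.2⟩
  have htend : Tendsto g (nhdsWithin σ₂ (Ioi σ₂)) (nhds (F.X σ₂ t₁ x₁ - 0)) := by
    apply Tendsto.sub
    · exact ((Xcont F ht₁ hx₁ ⟨hσσ, lt_trans ht.1 ht.2⟩).tendsto).mono_left
        nhdsWithin_le_nhds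
    · exact F.h_max t₂ ht₂ x₂ hx₂ hσ₂
  rw [sub_zero] at htend
  have hev : ∀ᶠ r in nhdsWithin σ₂ (Ioi σ₂), 0 < g r :=
    htend.eventually (eventually_gt_nhds hq)
  have hev2 : ∀ᶠ r in nhdsWithin σ₂ (Ioi σ₂), r ∈ Ioo σ₂ t :=
    Ioo_mem_nhdsGT_of_mem ⟨le_rfl, ht.1⟩
  obtain ⟨r₀, hgr₀, hr₀⟩ := (hev.and hev2).exists
  -- IVT on [r₀, t]
  have hIccsub : Icc r₀ t ⊆ Ioo σ₂ F.T := fun r hr =>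
    ⟨lt_of_lt_of_le hr₀.1 hr.1, lt_of_le_of_lt hr.2 ht.2⟩
  have hgcont : ContinuousOn g (Icc r₀ t) := fun r hr =>
    (hcont r (hIccsub hr)).continuousWithinAt
  by_contra hle
  push_neg at hle
  have hgt : g t < 0 := by
    have := hne t ht
    have : g t ≠ 0 := this
    have hgt' : g t ≤ 0 := by simp only [hg]; linarith
    exact lt_of_le_of_ne hgt' this
  have h0mem : (0:ℝ) ∈ Icc (g t) (g r₀) := ⟨hgt.le, hgr₀.le⟩
  have := intermediate_value_Icc' hr₀.2.le hgcont h0mem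
  obtain ⟨c, hc, hgc⟩ := this
  exact hne c (hIccsub hc) hgc

end LSAux

/-- Lemma 4.9: characteristics emanating from the boundary at later times stay strictly
below those emanating earlier: if `0 < s₁ < s₂ < t < T` and `Lᵢ = X(t; sᵢ, 0⁺)` are the
boundary limits, then `L₂ < L₁`. -/
theorem stmt10 (F : LSFlow) (s₁ s₂ t L₁ L₂ : ℝ)
    (hs₁ : 0 < s₁) (hs₁₂ : s₁ < s₂) (hs₂t : s₂ < t) (htT : t < F.T)
    (hL₁ : Filter.Tendsto (fun x => F.X t s₁ x) (nhdsWithin 0 (Set.Ioi 0)) (nhds L₁))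
    (hL₂ : Filter.Tendsto (fun x => F.X t s₂ x) (nhdsWithin 0 (Set.Ioi 0)) (nhds L₂)) :
    L₂ < L₁ := by
  have hm0 : 0 < min F.x₀ 1 := lt_min F.hx₀ one_pos
  have hm1 : min F.x₀ 1 ≤ 1 := min_le_right _ _
  have hs₂T : s₂ < F.T := lt_trans hs₂t htT
  have hs₂0 : 0 < s₂ := lt_trans hs₁ hs₁₂
  have hs₂Ico : s₂ ∈ Set.Ico (0:ℝ) F.T := ⟨hs₂0.le, hs₂T⟩
  have hs₁Ico : s₁ ∈ Set.Ico (0:ℝ) F.T := ⟨hs₁.le, by linarith⟩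
  -- a uniform bound on `w` over `[0,s₂] × [0, min x₀ 1]`
  obtain ⟨W, hWbd⟩ := (isCompact_Icc.prod isCompact_Icc).exists_bound_of_continuousOn
    (F.hw_cont.mono (show Set.Icc (0:ℝ) s₂ ×ˢ Set.Icc (0:ℝ) (min F.x₀ 1) ⊆
        Set.Ico 0 F.T ×ˢ Set.Ici 0 from
      Set.prod_mono (fun r hr => ⟨hr.1, lt_of_le_of_lt hr.2 hs₂T⟩)
        (fun p hp => hp.1)))
  have hW : ∀ r ∈ Set.Icc (0:ℝ) s₂, ∀ p ∈ Set.Icc (0:ℝ) (min F.x₀ 1), F.w r p ≤ W := by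
    intro r hr p hp
    have := hWbd (r, p) ⟨hr, hp⟩
    rw [Real.norm_eq_abs] at this
    exact le_trans (le_abs_self _) this
  have hδW : F.δ ≤ W := by
    have h1 : F.δ ≤ F.w 0 (min F.x₀ 1 / 2) :=
      F.h_in 0 ⟨le_rfl, F.hT⟩ _ ⟨by positivity,
        lt_of_lt_of_le (half_lt_self hm0) (min_le_left _ _)⟩
    have h2 := hW 0 ⟨le_rfl, hs₂0.le⟩ (min F.x₀ 1 / 2)
      ⟨by positivity, (half_lt_self hm0).le⟩
    linarith
  have hW0 : 0 < W := lt_of_lt_of_le F.hδ hδW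
  -- choose x_a
  obtain ⟨x_a, ⟨hxam, hAxa⟩, hxa0⟩ :=
    ((LSAux.eventually_small F hm0 hm1
      (mul_pos F.hδ (sub_pos.2 hs₁₂))).and eventually_mem_nhdsWithin).exists
  have hAxa_pos : 0 < LSAux.Af F x_a :=
    LSAux.Af_pos F hxa0 (le_of_lt (lt_of_lt_of_le hxam hm1))
  have hσa_low := LSAux.sigma_lower F hs₂0 hs₂Ico hxa0 hxam
  have hσa_s₂ : F.σ s₂ x_a < s₂ := F.hσ_lt s₂ x_a hs₂0 hxa0
  have hσa_s₁ : s₁ < F.σ s₂ x_a := by nlinarith [F.hδ]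
  have hσa_pos : 0 < F.σ s₂ x_a := lt_trans hs₁ hσa_s₁
  have hσa_up := LSAux.sigma_upper F hs₂0 hs₂Ico hxa0 hxam hσa_pos hW
  -- choose x_b
  obtain ⟨x_b, ⟨hxbm, hAxb⟩, hxb0⟩ :=
    ((LSAux.eventually_small F hm0 hm1
      (div_pos (mul_pos F.hδ hAxa_pos) hW0)).and
        eventually_mem_nhdsWithin).exists
  have hAxb_pos : 0 < LSAux.Af F x_b :=
    LSAux.Af_pos F hxb0 (le_of_lt (lt_of_lt_of_le hxbm hm1))
  have hσb_low := LSAux.sigma_lower F hs₂0 hs₂Ico hxb0 hxbm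
  have hσb_s₂ : F.σ s₂ x_b < s₂ := F.hσ_lt s₂ x_b hs₂0 hxb0
  have hσab : F.σ s₂ x_a < F.σ s₂ x_b := by
    have h1 : s₂ - F.σ s₂ x_b < LSAux.Af F x_a / W := by
      have h := lt_of_le_of_lt hσb_low hAxb
      rw [mul_div_assoc] at h
      exact (mul_lt_mul_iff_right₀ F.hδ).1 h
    have h2 : LSAux.Af F x_a / W ≤ s₂ - F.σ s₂ x_a :=
      (div_le_iff₀ hW0).2 (by linarith)
    linarith
  have hσb_pos : 0 < F.σ s₂ x_b := lt_trans hσa_pos hσab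
  have hσb_up := LSAux.sigma_upper F hs₂0 hs₂Ico hxb0 hxbm hσb_pos hW
  -- Step 1 : X t s₂ x_a ≤ L₁
  have haL₁ : F.X t s₂ x_a ≤ L₁ := by
    refine ge_of_tendsto hL₁ ?_
    filter_upwards [eventually_mem_nhdsWithin] with y hy
    exact (LSAux.compare F hs₁Ico hs₂Ico hy hxa0
      (lt_trans (F.hσ_lt s₁ y hs₁ hy) hσa_s₁) hσa_pos
      ⟨lt_trans hσa_s₂ hs₂t, htT⟩).le
  -- Step 2 : X t s₂ x_b < X t s₂ x_a
  have hba : F.X t s₂ x_b < F.X t s₂ x_a :=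
    LSAux.compare F hs₂Ico hs₂Ico hxa0 hxb0 hσab hσb_pos
      ⟨lt_trans hσb_s₂ hs₂t, htT⟩
  -- Step 3 : L₂ ≤ X t s₂ x_b
  have hL₂b : L₂ ≤ F.X t s₂ x_b := by
    refine le_of_tendsto hL₂ ?_
    filter_upwards [LSAux.eventually_small F hm0 hm1
      (div_pos (mul_pos F.hδ hAxb_pos) hW0),
      eventually_mem_nhdsWithin] with x hx hx0
    obtain ⟨hxm, hAx⟩ := hx
    have hσx_low := LSAux.sigma_lower F hs₂0 hs₂Ico hx0 hxm
    have hσbx : F.σ s₂ x_b < F.σ s₂ x := by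
      have h1 : s₂ - F.σ s₂ x < LSAux.Af F x_b / W := by
        have h := lt_of_le_of_lt hσx_low hAx
        rw [mul_div_assoc] at h
        exact (mul_lt_mul_iff_right₀ F.hδ).1 h
      have h2 : LSAux.Af F x_b / W ≤ s₂ - F.σ s₂ x_b :=
        (div_le_iff₀ hW0).2 (by linarith)
      linarith
    exact (LSAux.compare F hs₂Ico hs₂Ico hxb0 hx0 hσbx
      (lt_trans hσb_pos hσbx)
      ⟨lt_trans (F.hσ_lt s₂ x hs₂0 hx0) hs₂t, htT⟩).le
  linarith
end

section
/- Let f be a solution to the Lifshitz–Slyozov equation on [0,T) with T < ∞, under hypotheses (H1)–(H7), and assume Φ(x) := b(x)/a(x) ≥ Φ₀ := lim_{y→0⁺}Φ(y) for all x > 0. Then u(t) − Φ₀ ≥ (u(0) − Φ₀)·exp(−T·sup_{t∈(0,T)} ∫₀^∞ a(x) f(t,x) dx) > 0 for every t ∈ [0,T); in particular u stays strictly above Φ₀ on [0,T]. -/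
open MeasureTheory Set Filter

/-- Key estimate for the global-existence criterion (Theorem 1.7, part 1): if `f` is a
solution of the Lifshitz–Slyozov equation on `[0,T)`, `T < ∞`, with `Φ(x) ≥ Φ₀` for all
`x > 0`, then `u(t) − Φ₀ ≥ (u(0) − Φ₀) · exp(−T · sup_{t ∈ (0,T)} ∫₀^∞ a f dx) > 0` for
all `t ∈ [0,T)`; in particular `u` stays strictly above `Φ₀`. -/
theorem stmt13 (T Φ₀ : ℝ) (hT : 0 < T)
    (a Φ : ℝ → ℝ) (f : ℝ → ℝ → ℝ) (u : ℝ → ℝ)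
    (ha_nonneg : ∀ x > (0:ℝ), 0 ≤ a x)
    (hΦ : ∀ x > (0:ℝ), Φ₀ ≤ Φ x)
    (hf_nonneg : ∀ t ∈ Set.Ico (0:ℝ) T, ∀ x > (0:ℝ), 0 ≤ f t x)
    (hf_int : ∀ t ∈ Set.Ico (0:ℝ) T,
      MeasureTheory.IntegrableOn (fun x => a x * f t x) (Set.Ioi 0))
    (hfΦ_int : ∀ t ∈ Set.Ico (0:ℝ) T,
      MeasureTheory.IntegrableOn (fun x => a x * (Φ x - u t) * f t x) (Set.Ioi 0))
    (hu0 : Φ₀ < u 0)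
    (hu' : ∀ t ∈ Set.Ico (0:ℝ) T,
      HasDerivAt u (∫ x in Set.Ioi (0:ℝ), a x * (Φ x - u t) * f t x) t)
    (hbdd : BddAbove ((fun t => ∫ x in Set.Ioi (0:ℝ), a x * f t x) '' Set.Ioo 0 T)) :
    ∀ t ∈ Set.Ico (0:ℝ) T,
      0 < (u 0 - Φ₀) *
          Real.exp (-(T * sSup ((fun t => ∫ x in Set.Ioi (0:ℝ), a x * f t x) ''
            Set.Ioo 0 T))) ∧
      (u 0 - Φ₀) *
          Real.exp (-(T * sSup ((fun t => ∫ x in Set.Ioi (0:ℝ), a x * f t x) ''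
            Set.Ioo 0 T))) ≤ u t - Φ₀ := by
  set g : ℝ → ℝ := fun t => ∫ x in Set.Ioi (0:ℝ), a x * f t x with hg
  set M : ℝ := sSup (g '' Set.Ioo 0 T) with hM
  -- nonnegativity of g on [0,T)
  have hg_nonneg : ∀ s ∈ Set.Ico (0:ℝ) T, 0 ≤ g s := by
    intro s hs
    exact setIntegral_nonneg measurableSet_Ioi fun x hx =>
      mul_nonneg (ha_nonneg x hx) (hf_nonneg s hs x hx)
  have hgM : ∀ s ∈ Set.Ioo (0:ℝ) T, g s ≤ M := fun s hs =>
    le_csSup hbdd (mem_image_of_mem _ hs)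
  have hM0 : 0 ≤ M := by
    have h1 : (T/2) ∈ Set.Ioo (0:ℝ) T := ⟨by linarith, by linarith⟩
    exact le_trans (hg_nonneg (T/2) ⟨le_of_lt h1.1, h1.2⟩) (hgM _ h1)
  -- key differential inequality: u'(s) + g(s)*(u s - Φ₀) ≥ 0
  have hkey : ∀ s ∈ Set.Ico (0:ℝ) T,
      0 ≤ (∫ x in Set.Ioi (0:ℝ), a x * (Φ x - u s) * f s x) + (u s - Φ₀) * g s := by
    intro s hs
    have hint2 : MeasureTheory.IntegrableOn
        (fun x => (u s - Φ₀) * (a x * f s x)) (Set.Ioi 0) := (hf_int s hs).const_mul _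
    have hsum : (∫ x in Set.Ioi (0:ℝ), a x * (Φ x - u s) * f s x) + (u s - Φ₀) * g s
        = ∫ x in Set.Ioi (0:ℝ), a x * (Φ x - Φ₀) * f s x := by
      rw [hg]
      rw [← MeasureTheory.integral_const_mul]
      rw [← MeasureTheory.integral_add (hfΦ_int s hs) hint2]
      congr 1
      funext x
      ring
    rw [hsum]
    exact setIntegral_nonneg measurableSet_Ioi fun x hx =>
      mul_nonneg (mul_nonneg (ha_nonneg x hx) (sub_nonneg.2 (hΦ x hx)))
        (hf_nonneg s hs x hx)
  -- auxiliary function z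
  set z : ℝ → ℝ := fun s => (u s - Φ₀) * Real.exp (M * s) with hz
  have hz' : ∀ s ∈ Set.Ico (0:ℝ) T, HasDerivAt z
      (((∫ x in Set.Ioi (0:ℝ), a x * (Φ x - u s) * f s x) + M * (u s - Φ₀)) *
        Real.exp (M * s)) s := by
    intro s hs
    have he : HasDerivAt (fun s => Real.exp (M * s)) (Real.exp (M * s) * M) s := by
      simpa using ((hasDerivAt_id s).const_mul M).exp
    have : HasDerivAt (fun y => (u y - Φ₀) * Real.exp (M * y)) _ s :=
      ((hu' s hs).sub_const Φ₀).mul he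
    convert this using 1
    ring
  have hz0 : z 0 = u 0 - Φ₀ := by simp [hz]
  -- main claim : z 0 ≤ z t for t ∈ [0,T)
  have hmain : ∀ t ∈ Set.Ico (0:ℝ) T, z 0 ≤ z t := by
    intro t ht
    by_contra hcon
    push_neg at hcon
    have hz0pos : 0 < z 0 := by rw [hz0]; linarith
    set c : ℝ := (max (z t) 0 + z 0) / 2 with hc
    have hc_pos : 0 < c := by
      have := le_max_right (z t) 0
      rw [hc]; positivity
    have hc_lt : c < z 0 := by
      have : max (z t) 0 < z 0 := max_lt hcon hz0pos
      rw [hc]; linarith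
    have hc_ge : z t ≤ c := by
      have := le_max_left (z t) 0
      rw [hc]; linarith
    set A : Set ℝ := Set.Icc 0 t ∩ z ⁻¹' Set.Iic c with hA
    have hsub : Set.Icc (0:ℝ) t ⊆ Set.Ico 0 T := fun s hs => ⟨hs.1, lt_of_le_of_lt hs.2 ht.2⟩
    have hzc : ContinuousOn z (Set.Icc 0 t) := fun s hs =>
      ((hz' s (hsub hs)).continuousAt).continuousWithinAt
    have hAne : A.Nonempty := ⟨t, ⟨ht.1, le_refl t⟩, hc_ge⟩
    have hAclosed : IsClosed A := hzc.preimage_isClosed_of_isClosed isClosed_Icc isClosed_Iic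
    have hAbdd : BddBelow A := ⟨0, fun s hs => hs.1.1⟩
    set s₀ : ℝ := sInf A with hs₀
    have hs₀A : s₀ ∈ A := hAclosed.csInf_mem hAne hAbdd
    have hs₀le : z s₀ ≤ c := hs₀A.2
    have hs₀Icc : s₀ ∈ Set.Icc (0:ℝ) t := hs₀A.1
    have hs₀pos : 0 < s₀ := by
      rcases lt_or_eq_of_le hs₀Icc.1 with h | h
      · exact h
      · exfalso; rw [← h] at hs₀le; linarith
    -- on [0, s₀), z > c
    have hzgt : ∀ s ∈ Set.Ico (0:ℝ) s₀, c < z s := by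
      intro s hs
      by_contra hle
      push_neg at hle
      have : s ∈ A := ⟨⟨hs.1, le_trans (le_of_lt hs.2) hs₀Icc.2⟩, hle⟩
      exact absurd (csInf_le hAbdd this) (not_le.2 hs.2)
    -- z is monotone on [0, s₀]
    have hsub2 : Set.Icc (0:ℝ) s₀ ⊆ Set.Ico 0 T := fun s hs =>
      ⟨hs.1, lt_of_le_of_lt (le_trans hs.2 hs₀Icc.2) ht.2⟩
    have hmono : MonotoneOn z (Set.Icc 0 s₀) := by
      apply monotoneOn_of_deriv_nonneg (convex_Icc 0 s₀)
      · exact fun s hs => ((hz' s (hsub2 hs)).continuousAt).continuousWithinAt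
      · intro s hs
        rw [interior_Icc] at hs
        exact ((hz' s (hsub2 ⟨le_of_lt hs.1, le_of_lt hs.2⟩)).differentiableAt).differentiableWithinAt
      · intro s hs
        rw [interior_Icc] at hs
        have hsIco : s ∈ Set.Ico (0:ℝ) T := hsub2 ⟨le_of_lt hs.1, le_of_lt hs.2⟩
        rw [(hz' s hsIco).deriv]
        have hzs : c < z s := hzgt s ⟨le_of_lt hs.1, hs.2⟩
        have hvs : 0 < u s - Φ₀ := by
          have h := lt_trans hc_pos hzs
          simp only [hz] at h
          nlinarith [Real.exp_pos (M * s)]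
        have hgs : g s ≤ M := hgM s ⟨hs.1, by
          have := hs₀Icc.2; have := ht.2; have := hs.2; linarith⟩
        have h1 := hkey s hsIco
        have h2 : 0 ≤ (∫ x in Set.Ioi (0:ℝ), a x * (Φ x - u s) * f s x) + M * (u s - Φ₀) := by
          nlinarith
        exact mul_nonneg h2 (le_of_lt (Real.exp_pos _))
    have := hmono ⟨le_refl 0, le_of_lt hs₀pos⟩ ⟨le_of_lt hs₀pos, le_refl s₀⟩ (le_of_lt hs₀pos)
    linarith
  -- conclude
  intro t ht
  have hexp := Real.exp_pos (-(T * M))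
  refine ⟨mul_pos (by linarith) hexp, ?_⟩
  have h1 : z 0 ≤ z t := hmain t ht
  rw [hz0, hz] at h1
  have h2 : Real.exp (-(T * M)) ≤ Real.exp (-(M * t)) := by
    apply Real.exp_le_exp.2
    have : M * t ≤ T * M := by nlinarith [ht.1, le_of_lt ht.2]
    linarith
  have h3 : (u 0 - Φ₀) * Real.exp (-(T * M)) ≤ (u 0 - Φ₀) * Real.exp (-(M * t)) :=
    mul_le_mul_of_nonneg_left h2 (by linarith)
  refine le_trans h3 ?_
  simp only [hz] at h1
  have he := Real.exp_pos (M * t)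
  rw [Real.exp_neg]
  calc (u 0 - Φ₀) * (Real.exp (M * t))⁻¹
      ≤ ((u t - Φ₀) * Real.exp (M * t)) * (Real.exp (M * t))⁻¹ :=
        mul_le_mul_of_nonneg_right h1 (inv_nonneg.2 he.le)
    _ = u t - Φ₀ := by field_simp
end

section
/- Suppose there exist C > 0 and x* > 0 such that −Φ'(x) < C/a(x) for all x ∈ (0,x*) (assumption H8a). Define φ(x) = 1/a(x) for x ≤ x̄ and φ(x) = 1/a(x̄) for x > x̄, with x̄ = x* ∧ 1. Then, assuming a' and b' are bounded on (x̄,∞) and 0 ≤ u₁(t) ≤ ρ, there exists K > 0 such that ∂ₓ[v₁(t,x)φ(x)] ≤ K φ(x) for all x > 0 (x ≠ x̄) and t ∈ (0,T), where v₁(t,x) = a(x)u₁(t) − b(x). Moreover φ(x) ≥ 1/‖a‖_{L^∞(0,x̄)} and a(x)φ(x) ≤ 1 for x < x̄. -/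
open MeasureTheory Set Filter

/-- Lemma 2.3, case 1 (the Gronwall weight under (H8a)): suppose
`−Φ'(x) < C / a(x)` on `(0, x*)`, set `x̄ = min x* 1` and
`φ(x) = 1/a(x)` for `x ≤ x̄`, `φ(x) = 1/a(x̄)` for `x > x̄`.  If `a'` and `b'` are
bounded on `(x̄, ∞)` and `0 ≤ u₁(t) ≤ ρ`, then there is `K > 0` with
`∂ₓ[v₁(t,·) φ](x) ≤ K φ(x)` for all `x > 0`, `x ≠ x̄`, and `t ∈ (0,T)`, where
`v₁(t,x) = a(x) u₁(t) − b(x)`; moreover `φ ≥ 1/‖a‖_{L^∞(0,x̄)}` everywhere and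
`a φ ≤ 1` on `(0, x̄)`. -/
theorem stmt17 (T ρ C xstar : ℝ) (hT : 0 < T) (hρ : 0 < ρ) (hC : 0 < C)
    (hxstar : 0 < xstar)
    (a b a' b' Φ' : ℝ → ℝ) (u₁ : ℝ → ℝ)
    (ha_cont : ContinuousOn a (Set.Ici 0)) (hb_cont : ContinuousOn b (Set.Ici 0))
    (ha_nonneg : ∀ x ≥ (0:ℝ), 0 ≤ a x) (hb_nonneg : ∀ x ≥ (0:ℝ), 0 ≤ b x)
    (ha_pos : ∀ x > (0:ℝ), 0 < a x)
    (ha' : ∀ x > (0:ℝ), HasDerivAt a (a' x) x)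
    (hb' : ∀ x > (0:ℝ), HasDerivAt b (b' x) x)
    (hΦ' : ∀ x > (0:ℝ), HasDerivAt (fun y => b y / a y) (Φ' x) x)
    -- (H8a)
    (hH8a : ∀ x ∈ Set.Ioo (0:ℝ) xstar, -Φ' x < C / a x)
    -- boundedness of `a'`, `b'` beyond `x̄ = min x* 1`
    (ha'_bdd : ∃ Ma, ∀ x > min xstar 1, |a' x| ≤ Ma)
    (hb'_bdd : ∃ Mb, ∀ x > min xstar 1, |b' x| ≤ Mb)
    (hu₁ : ∀ t ∈ Set.Ioo (0:ℝ) T, 0 ≤ u₁ t ∧ u₁ t ≤ ρ) :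
    ∃ K > (0:ℝ), ∀ t ∈ Set.Ioo (0:ℝ) T, ∀ x > (0:ℝ), x ≠ min xstar 1 →
      (∃ d : ℝ,
        HasDerivAt (fun y => (a y * u₁ t - b y) *
          (if y ≤ min xstar 1 then 1 / a y else 1 / a (min xstar 1))) d x ∧
        d ≤ K * (if x ≤ min xstar 1 then 1 / a x else 1 / a (min xstar 1))) ∧
      (sSup (a '' Set.Ioc 0 (min xstar 1)))⁻¹ ≤
        (if x ≤ min xstar 1 then 1 / a x else 1 / a (min xstar 1)) ∧
      (x < min xstar 1 →
        a x * (if x ≤ min xstar 1 then 1 / a x else 1 / a (min xstar 1)) ≤ 1) := by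

  obtain ⟨Ma, hMa⟩ := ha'_bdd
  obtain ⟨Mb, hMb⟩ := hb'_bdd
  set xb := min xstar 1 with hxb
  have hxbpos : 0 < xb := lt_min hxstar one_pos
  have hxble : xb ≤ xstar := min_le_left _ _
  have haxb : 0 < a xb := ha_pos xb hxbpos
  -- bounded above
  have hbdd : BddAbove (a '' Set.Ioc 0 xb) := by
    have h1 : BddAbove (a '' Set.Icc 0 xb) :=
      (isCompact_Icc.image_of_continuousOn
        (ha_cont.mono (fun y hy => hy.1))).bddAbove
    exact h1.mono (Set.image_mono Set.Ioc_subset_Icc_self)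
  have hMxb : a xb ≤ sSup (a '' Set.Ioc 0 xb) :=
    le_csSup hbdd ⟨xb, ⟨hxbpos, le_refl _⟩, rfl⟩
  have hMpos : 0 < sSup (a '' Set.Ioc 0 xb) := lt_of_lt_of_le haxb hMxb
  refine ⟨C + max 0 (Ma * ρ + Mb), by positivity, ?_⟩
  intro t ht x hx hxne
  have hax : 0 < a x := ha_pos x hx
  refine ⟨?_, ?_, ?_⟩
  · -- derivative part
    rcases lt_or_gt_of_ne hxne with hlt | hgt
    · -- x < xb : φ = 1/a near x
      have hmem : Set.Ioo (0:ℝ) xb ∈ nhds x := Ioo_mem_nhds hx hlt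
      have hg : HasDerivAt (fun y => u₁ t - b y / a y) (-Φ' x) x := by
        simpa using (hΦ' x hx).const_sub (u₁ t)
      have heq : (fun y => (a y * u₁ t - b y) *
          (if y ≤ xb then 1 / a y else 1 / a xb)) =ᶠ[nhds x]
          (fun y => u₁ t - b y / a y) := by
        filter_upwards [hmem] with y hy
        rw [if_pos hy.2.le]
        have : a y ≠ 0 := (ha_pos y hy.1).ne'
        field_simp
      refine ⟨-Φ' x, hg.congr_of_eventuallyEq heq, ?_⟩
      rw [if_pos hlt.le]
      have hbound : -Φ' x < C / a x := hH8a x ⟨hx, lt_of_lt_of_le hlt hxble⟩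
      have : C / a x ≤ (C + max 0 (Ma * ρ + Mb)) * (1 / a x) := by
        rw [div_eq_mul_one_div]
        exact mul_le_mul_of_nonneg_right
          (le_add_of_nonneg_right (le_max_left _ _)) (by positivity)
      linarith
    · -- x > xb : φ constant near x
      have hmem : Set.Ioi xb ∈ nhds x := Ioi_mem_nhds hgt
      have hh : HasDerivAt (fun y => (a y * u₁ t - b y) * (1 / a xb))
          ((a' x * u₁ t - b' x) * (1 / a xb)) x :=
        (((ha' x hx).mul_const (u₁ t)).sub (hb' x hx)).mul_const _
      have heq : (fun y => (a y * u₁ t - b y) *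
          (if y ≤ xb then 1 / a y else 1 / a xb)) =ᶠ[nhds x]
          (fun y => (a y * u₁ t - b y) * (1 / a xb)) := by
        filter_upwards [hmem] with y hy
        rw [if_neg (not_le.mpr hy)]
      refine ⟨_, hh.congr_of_eventuallyEq heq, ?_⟩
      rw [if_neg (not_le.mpr hgt)]
      apply mul_le_mul_of_nonneg_right _ (by positivity)
      obtain ⟨hu0, huρ⟩ := hu₁ t ht
      have h1 : a' x * u₁ t ≤ Ma * ρ := by
        calc a' x * u₁ t ≤ |a' x| * u₁ t :=
              mul_le_mul_of_nonneg_right (le_abs_self _) hu0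
          _ ≤ Ma * ρ := mul_le_mul (hMa x hgt) huρ hu0
              ((abs_nonneg _).trans (hMa x hgt))
      have h2 : -b' x ≤ Mb := (neg_le_abs _).trans (hMb x hgt)
      have h3 : Ma * ρ + Mb ≤ max 0 (Ma * ρ + Mb) := le_max_right _ _
      linarith
  · -- φ ≥ 1/sSup
    split_ifs with hle
    · have : a x ≤ sSup (a '' Set.Ioc 0 xb) :=
        le_csSup hbdd ⟨x, ⟨hx, hle⟩, rfl⟩
      rw [one_div]
      exact inv_anti₀ hax this
    · rw [one_div]
      exact inv_anti₀ haxb hMxb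
  · intro hlt
    rw [if_pos hlt.le, mul_one_div, div_self hax.ne']
end
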